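/- arXiv:2412.15155 — 4 statements merged into one kernel-verified Lean document; each statement's English description precedes it below -/
import Mathlib

section
/- Fix an integer m ≥ 2, a real λ > (m−1)²/4, β = √(λ − (m−1)²/4), ψ(t) = sinh(t)^{−(m−1)/2} e^{iβt}, and for R > 0 let F_R(t) = ψ(t) sin²((2π/R)(t − R/2)) for t > 0. Then for every R₀ > 0 there exists a constant C > 0, depending only on m, λ and R₀, such that for all R > R₀: ∫_{R/2}^{R} |F_R''(t)|² sinh^{m−1}(t) dt ≤ C ∫_{R/2}^{R} |F_R(t)|² sinh^{m−1}(t) dt. -/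
open Filter Set
open scoped Real

noncomputable section

def psiA (r β : ℝ) (t : ℝ) : ℂ :=
  ((Real.sinh t ^ r : ℝ) : ℂ) * Complex.exp (Complex.I * β * t)
def uA (aa c t : ℝ) : ℝ := Real.sin (aa * (t - c)) ^ 2
def u1A (aa c t : ℝ) : ℝ := 2 * Real.sin (aa * (t - c)) * Real.cos (aa * (t - c)) * aa
def u2A (aa c t : ℝ) : ℝ :=
  2 * aa ^ 2 * (Real.cos (aa * (t - c)) ^ 2 - Real.sin (aa * (t - c)) ^ 2)
def LA (r β t : ℝ) : ℂ := ((r * Real.cosh t / Real.sinh t : ℝ) : ℂ) + Complex.I * β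
def L1A (r t : ℝ) : ℂ := ((-r / Real.sinh t ^ 2 : ℝ) : ℂ)
def G1A (r β aa c t : ℝ) : ℂ := psiA r β t * (LA r β t * uA aa c t + u1A aa c t)
def G2A (r β aa c t : ℝ) : ℂ :=
  psiA r β t * (LA r β t * (LA r β t * uA aa c t + u1A aa c t) +
    (L1A r t * uA aa c t + LA r β t * u1A aa c t + u2A aa c t))

lemma theta_hasDeriv (aa c t : ℝ) : HasDerivAt (fun t => aa * (t - c)) aa t := by
  simpa using ((hasDerivAt_id t).sub_const c).const_mul aa

lemma uA_hasDeriv (aa c t : ℝ) : HasDerivAt (uA aa c) (u1A aa c t) t := by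
  have h := ((Real.hasDerivAt_sin (aa * (t - c))).comp t (theta_hasDeriv aa c t)).pow 2
  refine h.congr_deriv (Eq.symm ?_)
  simp only [u1A, Function.comp]
  ring

lemma u1A_hasDeriv (aa c t : ℝ) : HasDerivAt (u1A aa c) (u2A aa c t) t := by
  have hs := (Real.hasDerivAt_sin (aa * (t - c))).comp t (theta_hasDeriv aa c t)
  have hc := (Real.hasDerivAt_cos (aa * (t - c))).comp t (theta_hasDeriv aa c t)
  have h := (((hs.const_mul 2).mul hc).mul_const aa)
  refine h.congr_deriv (Eq.symm ?_)
  simp only [u2A, u1A, Function.comp]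
  ring

lemma psiA_hasDeriv (r β t : ℝ) (ht : 0 < t) :
    HasDerivAt (psiA r β) (psiA r β t * LA r β t) t := by
  have hsp : 0 < Real.sinh t := Real.sinh_pos_iff.2 ht
  have h1 : HasDerivAt (fun t : ℝ => Real.sinh t ^ r)
      (r * Real.sinh t ^ (r - 1) * Real.cosh t) t := by
    have := (Real.hasDerivAt_rpow_const (x := Real.sinh t) (p := r)
      (Or.inl hsp.ne')).comp t (Real.hasDerivAt_sinh t)
    exact this.congr_deriv (by ring)
  have h2 : HasDerivAt (fun t : ℝ => Complex.exp (Complex.I * β * t))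
      (Complex.exp (Complex.I * β * t) * (Complex.I * β)) t := by
    have hin : HasDerivAt (fun t : ℝ => Complex.I * β * t) (Complex.I * β) t := by
      simpa using (Complex.ofRealCLM.hasDerivAt (x := t)).const_mul (Complex.I * β)
    exact hin.cexp
  have h := (h1.ofReal_comp).mul h2
  refine h.congr_deriv (Eq.symm ?_)
  simp only [psiA, LA]
  have hr1 : Real.sinh t ^ (r - 1) = Real.sinh t ^ r / Real.sinh t := by
    rw [Real.rpow_sub hsp, Real.rpow_one]
  rw [hr1]
  push_cast
  have : (Real.sinh t : ℂ) ≠ 0 := by exact_mod_cast hsp.ne'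
  field_simp

lemma LA_hasDeriv (r β t : ℝ) (ht : 0 < t) : HasDerivAt (LA r β) (L1A r t) t := by
  have hsp : 0 < Real.sinh t := Real.sinh_pos_iff.2 ht
  have h1 : HasDerivAt (fun t : ℝ => r * Real.cosh t / Real.sinh t)
      (-r / Real.sinh t ^ 2) t := by
    have := (((Real.hasDerivAt_cosh t).const_mul r).div (Real.hasDerivAt_sinh t) hsp.ne')
    refine this.congr_deriv (Eq.symm ?_)
    rw [div_eq_div_iff (by positivity) (by positivity)]
    linear_combination (r * Real.sinh t ^ 2) * Real.cosh_sq_sub_sinh_sq t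
  have h2 := (h1.ofReal_comp).add_const (Complex.I * β)
  exact h2

lemma FA_hasDeriv (r β aa c t : ℝ) (ht : 0 < t) :
    HasDerivAt (fun t => psiA r β t * ((uA aa c t : ℝ) : ℂ)) (G1A r β aa c t) t := by
  have h := (psiA_hasDeriv r β t ht).mul ((uA_hasDeriv aa c t).ofReal_comp)
  refine h.congr_deriv (Eq.symm ?_)
  simp only [G1A]
  try push_cast
  try ring

lemma G1A_hasDeriv (r β aa c t : ℝ) (ht : 0 < t) :
    HasDerivAt (G1A r β aa c) (G2A r β aa c t) t := by
  have hin : HasDerivAt (fun t => LA r β t * ((uA aa c t : ℝ) : ℂ) + ((u1A aa c t : ℝ) : ℂ))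
      (L1A r t * uA aa c t + LA r β t * u1A aa c t + u2A aa c t) t := by
    have h1 := ((LA_hasDeriv r β t ht).mul ((uA_hasDeriv aa c t).ofReal_comp)).add
      ((u1A_hasDeriv aa c t).ofReal_comp)
    refine h1.congr_deriv (Eq.symm ?_)
    try push_cast
    try ring
  have h := (psiA_hasDeriv r β t ht).mul hin
  refine h.congr_deriv (Eq.symm ?_)
  simp only [G2A, G1A]
  try push_cast
  try ring

lemma deriv2_eq (r β aa c t : ℝ) (ht : 0 < t) :
    deriv (deriv (fun t => psiA r β t * ((uA aa c t : ℝ) : ℂ))) t = G2A r β aa c t := by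
  have hev : deriv (fun t => psiA r β t * ((uA aa c t : ℝ) : ℂ)) =ᶠ[nhds t] G1A r β aa c := by
    filter_upwards [isOpen_Ioi.mem_nhds (show t ∈ Ioi (0:ℝ) from ht)] with x hx
    exact (FA_hasDeriv r β aa c x hx).deriv
  rw [hev.deriv_eq, (G1A_hasDeriv r β aa c t ht).deriv]

lemma cabs_mul_le {z w : ℂ} {bz bw : ℝ} (hz : ‖z‖ ≤ bz) (hw : ‖w‖ ≤ bw) :
    ‖z * w‖ ≤ bz * bw := by
  rw [norm_mul]
  exact mul_le_mul hz hw (norm_nonneg w) (le_trans (norm_nonneg z) hz)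

lemma cabs_add_le {z w : ℂ} {bz bw : ℝ} (hz : ‖z‖ ≤ bz) (hw : ‖w‖ ≤ bw) :
    ‖z + w‖ ≤ bz + bw :=
  (norm_add_le z w).trans (add_le_add hz hw)

lemma abs_psiA (r β t : ℝ) (ht : 0 < t) : ‖psiA r β t‖ = Real.sinh t ^ r := by
  rw [psiA, norm_mul, Complex.norm_real, Real.norm_eq_abs, Complex.norm_exp]
  have h0 : (Complex.I * β * t).re = 0 := by simp
  rw [h0, Real.exp_zero, mul_one,
    abs_of_nonneg (Real.rpow_nonneg (Real.sinh_nonneg_iff.2 ht.le) r)]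

lemma coth_anti {h t : ℝ} (h0 : 0 < h) (hht : h ≤ t) :
    Real.cosh t / Real.sinh t ≤ Real.cosh h / Real.sinh h := by
  have hsh : 0 < Real.sinh h := Real.sinh_pos_iff.2 h0
  have hst : 0 < Real.sinh t := Real.sinh_pos_iff.2 (h0.trans_le hht)
  rw [div_le_div_iff₀ hst hsh]
  have h1 : 0 ≤ Real.sinh (t - h) := Real.sinh_nonneg_iff.2 (by linarith)
  rw [Real.sinh_sub] at h1
  linarith

lemma LA_bound {r β h t : ℝ} (h0 : 0 < h) (hht : h ≤ t) :
    ‖LA r β t‖ ≤ |r| * Real.cosh h / Real.sinh h + |β| := by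
  have hsh : 0 < Real.sinh h := Real.sinh_pos_iff.2 h0
  have hst : 0 < Real.sinh t := Real.sinh_pos_iff.2 (h0.trans_le hht)
  have h1 : ‖Complex.I * β‖ = |β| := by
    rw [norm_mul, Complex.norm_I, one_mul, Complex.norm_real, Real.norm_eq_abs]
  refine (norm_add_le _ _).trans ?_
  rw [h1, Complex.norm_real, Real.norm_eq_abs]
  have h2 : |r * Real.cosh t / Real.sinh t| = |r| * (Real.cosh t / Real.sinh t) := by
    rw [abs_div, abs_mul, abs_of_pos (Real.cosh_pos (x := t)), abs_of_pos hst, mul_div_assoc]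
  rw [h2]
  have h3 := coth_anti h0 hht
  have h4 : |r| * (Real.cosh t / Real.sinh t) ≤ |r| * (Real.cosh h / Real.sinh h) :=
    mul_le_mul_of_nonneg_left h3 (abs_nonneg r)
  rw [mul_div_assoc]
  linarith

lemma L1A_bound {r h t : ℝ} (h0 : 0 < h) (hht : h ≤ t) :
    ‖L1A r t‖ ≤ |r| / Real.sinh h ^ 2 := by
  have hsh : 0 < Real.sinh h := Real.sinh_pos_iff.2 h0
  have hst : 0 < Real.sinh t := Real.sinh_pos_iff.2 (h0.trans_le hht)
  rw [L1A, Complex.norm_real, Real.norm_eq_abs, abs_div, abs_neg,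
    abs_of_pos (by positivity : (0:ℝ) < Real.sinh t ^ 2)]
  have hs2 : Real.sinh h ^ 2 ≤ Real.sinh t ^ 2 :=
    pow_le_pow_left₀ hsh.le (Real.sinh_le_sinh.2 hht) 2
  exact div_le_div_of_nonneg_left (abs_nonneg r) (by positivity) hs2

lemma uA_nonneg (aa c t : ℝ) : 0 ≤ uA aa c t := sq_nonneg _

lemma uA_bound (aa c t : ℝ) : |(uA aa c t : ℝ)| ≤ 1 := by
  rw [uA, abs_of_nonneg (sq_nonneg _)]
  exact Real.sin_sq_le_one _

lemma u1A_bound {aa a₀ : ℝ} (ha : |aa| ≤ a₀) (c t : ℝ) : |(u1A aa c t : ℝ)| ≤ 2 * a₀ := by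
  rw [u1A]
  have h1 : |2 * Real.sin (aa*(t-c)) * Real.cos (aa*(t-c)) * aa|
      = 2 * |Real.sin (aa*(t-c))| * |Real.cos (aa*(t-c))| * |aa| := by
    rw [abs_mul, abs_mul, abs_mul]; norm_num
  rw [h1]
  have hs := Real.abs_sin_le_one (aa*(t-c))
  have hc := Real.abs_cos_le_one (aa*(t-c))
  have h2 : 2 * |Real.sin (aa*(t-c))| * |Real.cos (aa*(t-c))| * |aa| ≤ 2 * 1 * 1 * a₀ := by
    gcongr <;> simp [abs_nonneg]
  linarith

lemma u2A_bound {aa a₀ : ℝ} (ha : |aa| ≤ a₀) (c t : ℝ) : |(u2A aa c t : ℝ)| ≤ 2 * a₀ ^ 2 := by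
  rw [u2A]
  have h1 : |Real.cos (aa*(t-c))^2 - Real.sin (aa*(t-c))^2| ≤ 1 := by
    rw [abs_le]
    constructor
    · nlinarith [Real.sin_sq_le_one (aa*(t-c)), sq_nonneg (Real.cos (aa*(t-c)))]
    · nlinarith [Real.cos_sq_le_one (aa*(t-c)), sq_nonneg (Real.sin (aa*(t-c)))]
  have ha0 : 0 ≤ a₀ := le_trans (abs_nonneg aa) ha
  have h2 : aa ^ 2 ≤ a₀ ^ 2 := by
    rw [← sq_abs aa]
    exact pow_le_pow_left₀ (abs_nonneg aa) ha 2
  have h3 : |2 * aa ^ 2 * (Real.cos (aa*(t-c))^2 - Real.sin (aa*(t-c))^2)|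
      = 2 * aa ^ 2 * |Real.cos (aa*(t-c))^2 - Real.sin (aa*(t-c))^2| := by
    rw [abs_mul, abs_of_nonneg (by positivity : (0:ℝ) ≤ 2 * aa ^ 2)]
  rw [h3]
  nlinarith [sq_nonneg aa]

lemma G2A_bound {r β aa c t h a₀ : ℝ} (h0 : 0 < h) (hht : h ≤ t) (ha : |aa| ≤ a₀) :
    ‖G2A r β aa c t‖ ≤ Real.sinh t ^ r *
      ((|r| * Real.cosh h / Real.sinh h + |β|) *
          ((|r| * Real.cosh h / Real.sinh h + |β|) * 1 + 2 * a₀)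
        + ((|r| / Real.sinh h ^ 2) * 1 + (|r| * Real.cosh h / Real.sinh h + |β|) * (2 * a₀)
            + 2 * a₀ ^ 2)) := by
  have ht : 0 < t := h0.trans_le hht
  have hL := LA_bound (r := r) (β := β) h0 hht
  have hL1 := L1A_bound (r := r) h0 hht
  have hu : ‖((uA aa c t : ℝ) : ℂ)‖ ≤ 1 := by
    rw [Complex.norm_real, Real.norm_eq_abs]; exact uA_bound aa c t
  have hu1 : ‖((u1A aa c t : ℝ) : ℂ)‖ ≤ 2 * a₀ := by
    rw [Complex.norm_real, Real.norm_eq_abs]; exact u1A_bound ha c t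
  have hu2 : ‖((u2A aa c t : ℝ) : ℂ)‖ ≤ 2 * a₀ ^ 2 := by
    rw [Complex.norm_real, Real.norm_eq_abs]; exact u2A_bound ha c t
  have hψ : ‖psiA r β t‖ ≤ Real.sinh t ^ r := le_of_eq (abs_psiA r β t ht)
  exact cabs_mul_le hψ (cabs_add_le
    (cabs_mul_le hL (cabs_add_le (cabs_mul_le hL hu) hu1))
    (cabs_add_le (cabs_add_le (cabs_mul_le hL1 hu) (cabs_mul_le hL hu1)) hu2))

lemma key_id {m : ℕ} (hm : 1 ≤ m) {t : ℝ} (ht : 0 < t) :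
    (Real.sinh t ^ (-(((m : ℝ) - 1) / 2))) ^ 2 * Real.sinh t ^ (m - 1) = 1 := by
  have hsp : 0 < Real.sinh t := Real.sinh_pos_iff.2 ht
  have h1 : (Real.sinh t ^ (-(((m : ℝ) - 1) / 2))) ^ 2
      = Real.sinh t ^ (-((m : ℝ) - 1)) := by
    rw [← Real.rpow_natCast (Real.sinh t ^ (-(((m : ℝ) - 1) / 2))) 2,
      ← Real.rpow_mul hsp.le]
    norm_num
  have h2 : Real.sinh t ^ (m - 1) = Real.sinh t ^ ((m : ℝ) - 1) := by
    rw [← Real.rpow_natCast (Real.sinh t) (m - 1)]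
    congr 1
    push_cast [hm]
    ring
  rw [h1, h2, ← Real.rpow_add hsp]
  norm_num

lemma sin_quarter {θ : ℝ} (h1 : π / 4 ≤ θ) (h2 : θ ≤ 3 * π / 4) :
    Real.sqrt 2 / 2 ≤ Real.sin θ := by
  have h3 : Real.sin θ = Real.cos (|π / 2 - θ|) := by
    rw [Real.cos_abs, Real.cos_pi_div_two_sub]
  rw [h3, ← Real.cos_pi_div_four]
  refine Real.cos_le_cos_of_nonneg_of_le_pi (abs_nonneg _) ?_ ?_
  · linarith [Real.pi_pos]
  · rw [abs_le]
    constructor <;> linarith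

set_option maxHeartbeats 1000000 in
/-- for an integer `m ≥ 2`, a real `λ > (m−1)²/4`, `β = √(λ − (m−1)²/4)`,
`ψ(t) = sinh(t)^{−(m−1)/2} e^{iβt}` and `F_R(t) = ψ(t) sin²((2π/R)(t − R/2))`: for every
`R₀ > 0` there is `C > 0` (depending only on `m`, `λ`, `R₀`) such that for all `R > R₀`,
`∫_{R/2}^R |F_R''|² sinh^{m−1} ≤ C ∫_{R/2}^R |F_R|² sinh^{m−1}`. -/
theorem statement13
    (m : ℕ) (hm : 2 ≤ m) (lam : ℝ) (hlam : ((m : ℝ) - 1) ^ 2 / 4 < lam)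
    (β : ℝ) (hβ : β = Real.sqrt (lam - ((m : ℝ) - 1) ^ 2 / 4))
    (ψ : ℝ → ℂ)
    (hψ : ∀ t : ℝ, ψ t =
      ((Real.sinh t ^ (-(((m : ℝ) - 1) / 2)) : ℝ) : ℂ) * Complex.exp (Complex.I * β * t))
    (F : ℝ → ℝ → ℂ)
    (hF : ∀ R t : ℝ, F R t = ψ t * ((Real.sin (2 * π / R * (t - R / 2)) ^ 2 : ℝ) : ℂ)) :
    ∀ R₀ : ℝ, 0 < R₀ → ∃ C : ℝ, 0 < C ∧ ∀ R : ℝ, R₀ < R →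
      (∫ t in (R / 2)..R, ‖deriv (deriv (F R)) t‖ ^ 2 * Real.sinh t ^ (m - 1))
        ≤ C * ∫ t in (R / 2)..R, ‖F R t‖ ^ 2 * Real.sinh t ^ (m - 1) := by
  intro R₀ hR₀
  set r : ℝ := -(((m : ℝ) - 1) / 2) with hr
  set h : ℝ := R₀ / 2 with hh
  set a₀ : ℝ := 2 * π / R₀ with ha₀
  have hh0 : 0 < h := by positivity
  have hsh : 0 < Real.sinh h := Real.sinh_pos_iff.2 hh0
  have ha₀0 : 0 < a₀ := by rw [ha₀]; positivity
  set A : ℝ := |r| * Real.cosh h / Real.sinh h + |β| with hA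
  set B : ℝ := |r| / Real.sinh h ^ 2 with hB
  set K : ℝ := A * (A * 1 + 2 * a₀) + (B * 1 + A * (2 * a₀) + 2 * a₀ ^ 2) with hK
  clear_value r h a₀
  have hA0 : 0 ≤ A :=
    add_nonneg (div_nonneg (mul_nonneg (abs_nonneg r) (le_of_lt (Real.cosh_pos (x := h)))) hsh.le) (abs_nonneg β)
  have hB0 : 0 ≤ B := div_nonneg (abs_nonneg r) (by positivity)
  clear_value A B K
  have hK0 : 0 ≤ K := by
    rw [hK]
    nlinarith [ha₀0.le, sq_nonneg a₀, hA0, hB0, mul_nonneg hA0 ha₀0.le, mul_nonneg hA0 hA0]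
  refine ⟨8 * (K + 1) ^ 2, by nlinarith, ?_⟩
  intro R hR
  have hR0 : 0 < R := hR₀.trans hR
  set aa : ℝ := 2 * π / R with haa
  set c : ℝ := R / 2 with hc
  clear_value aa c
  have hcR : c ≤ R := by rw [hc]; linarith
  have haaA : |aa| ≤ a₀ := by
    rw [haa, ha₀, abs_of_pos (by positivity)]
    exact div_le_div_of_nonneg_left (by positivity) hR₀ hR.le
  have hFR : F R = fun t => psiA r β t * ((uA aa c t : ℝ) : ℂ) := by
    funext t
    rw [hF, hψ]
    simp only [psiA, uA, haa, hc]
  have htpos : ∀ t ∈ uIcc c R, 0 < t := by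
    intro t ht
    rw [uIcc_of_le hcR] at ht
    have hcp : 0 < c := by rw [hc]; positivity
    linarith [ht.1]
  have hhtle : ∀ t ∈ uIcc c R, h ≤ t := by
    intro t ht
    rw [uIcc_of_le hcR] at ht
    have : h ≤ c := by rw [hh, hc]; linarith
    linarith [ht.1]
  have hsinhne : ∀ t ∈ uIcc c R, Real.sinh t ≠ 0 :=
    fun t ht => (Real.sinh_pos_iff.2 (htpos t ht)).ne'
  -- continuity
  have hcu : Continuous fun t => uA aa c t := by
    simp only [uA]; fun_prop
  have hcu1 : Continuous fun t => u1A aa c t := by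
    simp only [u1A]; fun_prop
  have hcu2 : Continuous fun t => u2A aa c t := by
    simp only [u2A]; fun_prop
  have hcP : ContinuousOn (fun t => Real.sinh t ^ r) (uIcc c R) :=
    Real.continuous_sinh.continuousOn.rpow_const fun t ht => Or.inl (hsinhne t ht)
  have hcψ : ContinuousOn (psiA r β) (uIcc c R) := by
    apply ContinuousOn.mul
    · exact Complex.continuous_ofReal.comp_continuousOn hcP
    · exact (Complex.continuous_exp.comp (continuous_const.mul Complex.continuous_ofReal)).continuousOn
  have hcL : ContinuousOn (LA r β) (uIcc c R) := by
    apply ContinuousOn.add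
    · exact Complex.continuous_ofReal.comp_continuousOn
        (((continuous_const.mul Real.continuous_cosh).continuousOn).div
          Real.continuous_sinh.continuousOn hsinhne)
    · exact continuousOn_const
  have hcL1 : ContinuousOn (L1A r) (uIcc c R) :=
    Complex.continuous_ofReal.comp_continuousOn
      (continuousOn_const.div ((Real.continuous_sinh.pow 2).continuousOn)
        fun t ht => pow_ne_zero 2 (hsinhne t ht))
  have hcuC : ContinuousOn (fun t => ((uA aa c t : ℝ) : ℂ)) (uIcc c R) :=
    (Complex.continuous_ofReal.comp hcu).continuousOn
  have hcu1C : ContinuousOn (fun t => ((u1A aa c t : ℝ) : ℂ)) (uIcc c R) :=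
    (Complex.continuous_ofReal.comp hcu1).continuousOn
  have hcu2C : ContinuousOn (fun t => ((u2A aa c t : ℝ) : ℂ)) (uIcc c R) :=
    (Complex.continuous_ofReal.comp hcu2).continuousOn
  have hcG2 : ContinuousOn (G2A r β aa c) (uIcc c R) := by
    exact hcψ.mul ((hcL.mul ((hcL.mul hcuC).add hcu1C)).add
      (((hcL1.mul hcuC).add (hcL.mul hcu1C)).add hcu2C))
  have hcInt : ContinuousOn
      (fun t => ‖G2A r β aa c t‖ ^ 2 * Real.sinh t ^ (m - 1)) (uIcc c R) :=
    ((continuous_norm.comp_continuousOn hcG2).pow 2).mul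
      ((Real.continuous_sinh.pow (m - 1)).continuousOn)
  -- LHS rewrite
  have hLHSeq : (∫ t in c..R, ‖deriv (deriv (F R)) t‖ ^ 2 * Real.sinh t ^ (m - 1))
      = ∫ t in c..R, ‖G2A r β aa c t‖ ^ 2 * Real.sinh t ^ (m - 1) := by
    apply intervalIntegral.integral_congr
    intro t ht
    rw [hFR]
    dsimp only
    rw [deriv2_eq r β aa c t (htpos t ht)]
  -- pointwise bound on [c, R]
  have hpt : ∀ t ∈ Icc c R,
      ‖G2A r β aa c t‖ ^ 2 * Real.sinh t ^ (m - 1) ≤ K ^ 2 := by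
    intro t ht
    have htm : t ∈ uIcc c R := by rw [uIcc_of_le hcR]; exact ht
    have ht0 : 0 < t := htpos t htm
    have hb := G2A_bound (r := r) (β := β) (aa := aa) (c := c) (t := t) (a₀ := a₀)
      hh0 (hhtle t htm) haaA
    rw [← hA, ← hB, ← hK] at hb
    have hb2 : ‖G2A r β aa c t‖ ^ 2 ≤ (Real.sinh t ^ r) ^ 2 * K ^ 2 := by
      rw [← mul_pow]
      exact pow_le_pow_left₀ (norm_nonneg _) hb 2
    have hid : (Real.sinh t ^ r) ^ 2 * Real.sinh t ^ (m - 1) = 1 := by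
      rw [hr]
      exact key_id (le_trans one_le_two hm) ht0
    calc ‖G2A r β aa c t‖ ^ 2 * Real.sinh t ^ (m - 1)
        ≤ (Real.sinh t ^ r) ^ 2 * K ^ 2 * Real.sinh t ^ (m - 1) :=
          mul_le_mul_of_nonneg_right hb2 (by positivity)
      _ = K ^ 2 * ((Real.sinh t ^ r) ^ 2 * Real.sinh t ^ (m - 1)) := by ring
      _ = K ^ 2 := by rw [hid, mul_one]
  have hLHSle : (∫ t in c..R, ‖G2A r β aa c t‖ ^ 2 * Real.sinh t ^ (m - 1))
      ≤ K ^ 2 * (R / 2) := by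
    have h1 := intervalIntegral.integral_mono_on hcR (hcInt.intervalIntegrable)
      (intervalIntegrable_const (μ := MeasureTheory.volume) (c := K ^ 2)) hpt
    rw [intervalIntegral.integral_const, smul_eq_mul] at h1
    exact h1.trans_eq (by rw [hc]; ring)
  -- RHS rewrite
  have hRHSeq : (∫ t in c..R, ‖F R t‖ ^ 2 * Real.sinh t ^ (m - 1))
      = ∫ t in c..R, uA aa c t ^ 2 := by
    apply intervalIntegral.integral_congr
    intro t ht
    have ht0 : 0 < t := htpos t ht
    rw [hFR]
    simp only
    rw [norm_mul, abs_psiA r β t ht0, Complex.norm_real, Real.norm_eq_abs, abs_of_nonneg (uA_nonneg aa c t)]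
    have hid : (Real.sinh t ^ r) ^ 2 * Real.sinh t ^ (m - 1) = 1 := by
      rw [hr]
      exact key_id (le_trans one_le_two hm) ht0
    calc (Real.sinh t ^ r * uA aa c t) ^ 2 * Real.sinh t ^ (m - 1)
        = (Real.sinh t ^ r) ^ 2 * Real.sinh t ^ (m - 1) * uA aa c t ^ 2 := by ring
      _ = uA aa c t ^ 2 := by rw [hid, one_mul]
  -- lower bound on the sin⁴ integral
  have hcu4 : Continuous fun t => uA aa c t ^ 2 := hcu.pow 2
  have hIlow : R / 16 ≤ ∫ t in c..R, uA aa c t ^ 2 := by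
    have haapos : 0 < aa := by rw [haa]; positivity
    have hsub : ∫ t in (c + R / 8)..(c + 3 * R / 8), uA aa c t ^ 2
        ≤ ∫ t in c..R, uA aa c t ^ 2 := by
      apply intervalIntegral.integral_mono_interval (by linarith) (by linarith)
        (by rw [hc]; linarith)
      · exact Filter.Eventually.of_forall fun t => sq_nonneg _
      · exact (hcu4.continuousOn).intervalIntegrable
    have hptlow : ∀ t ∈ Icc (c + R / 8) (c + 3 * R / 8), (1/4 : ℝ) ≤ uA aa c t ^ 2 := by
      intro t ht
      have hθ1 : π / 4 ≤ aa * (t - c) := by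
        have : aa * (R / 8) ≤ aa * (t - c) :=
          mul_le_mul_of_nonneg_left (by linarith [ht.1]) haapos.le
        have heq : aa * (R / 8) = π / 4 := by
          rw [haa]; field_simp; ring
        linarith
      have hθ2 : aa * (t - c) ≤ 3 * π / 4 := by
        have : aa * (t - c) ≤ aa * (3 * R / 8) :=
          mul_le_mul_of_nonneg_left (by linarith [ht.2]) haapos.le
        have heq : aa * (3 * R / 8) = 3 * π / 4 := by
          rw [haa]; field_simp; ring
        linarith
      have hsin := sin_quarter hθ1 hθ2
      have h4 : (Real.sqrt 2 / 2) ^ 4 ≤ Real.sin (aa * (t - c)) ^ 4 :=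
        pow_le_pow_left₀ (by positivity) hsin 4
      have h5 : (Real.sqrt 2 / 2) ^ 4 = 1 / 4 := by
        rw [div_pow]
        have : Real.sqrt 2 ^ 4 = 4 := by
          rw [show (4 : ℕ) = 2 * 2 from rfl, pow_mul, Real.sq_sqrt (by norm_num : (2:ℝ) ≥ 0)]
          norm_num
        rw [this]; norm_num
      have h6 : uA aa c t ^ 2 = Real.sin (aa * (t - c)) ^ 4 := by
        rw [uA]; ring
      rw [h6]
      linarith
    have hconst : ∫ _ in (c + R / 8)..(c + 3 * R / 8), (1/4 : ℝ) = R / 16 := by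
      rw [intervalIntegral.integral_const, smul_eq_mul]
      ring
    have h2 := intervalIntegral.integral_mono_on (by linarith : c + R / 8 ≤ c + 3 * R / 8)
      (intervalIntegrable_const (μ := MeasureTheory.volume) (c := (1/4 : ℝ))) (hcu4.continuousOn.intervalIntegrable) hptlow
    rw [hconst] at h2
    linarith
  rw [hLHSeq, hRHSeq]
  have hfin1 : 8 * (K + 1) ^ 2 * (R / 16) ≤ 8 * (K + 1) ^ 2 * ∫ t in c..R, uA aa c t ^ 2 :=
    mul_le_mul_of_nonneg_left hIlow (by positivity)
  calc (∫ t in c..R, ‖G2A r β aa c t‖ ^ 2 * Real.sinh t ^ (m - 1))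
      ≤ K ^ 2 * (R / 2) := hLHSle
    _ ≤ 8 * (K + 1) ^ 2 * (R / 16) := by nlinarith [hK0, hR0.le, mul_nonneg hK0 hR0.le]
    _ ≤ 8 * (K + 1) ^ 2 * ∫ t in c..R, uA aa c t ^ 2 := hfin1
end
end

section
/- For an integer m ≥ 2 define f(t) = ∫₀ᵗ ( (∫₀^R sinh^{m−1}(s) ds) / sinh^{m−1}(R) ) dR for t > 0. Then f is convex on (0, +∞), its derivative is f'(t) = (∫₀ᵗ sinh^{m−1}(s) ds)/sinh^{m−1}(t), and f satisfies the identity f''(t) + (m−1) coth(t) f'(t) = 1 for every t > 0. -/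
open Filter Set
open scoped Real

noncomputable section

/-- The hyperbolic cotangent `coth t = cosh t / sinh t`. -/
def coth (t : ℝ) : ℝ := Real.cosh t / Real.sinh t

/-- The function `f(t) = ∫₀ᵗ ( (∫₀ᴿ sinh^{m−1}(s) ds) / sinh^{m−1}(R) ) dR`. -/
def fmodel (m : ℕ) (t : ℝ) : ℝ :=
  ∫ R in (0 : ℝ)..t, (∫ s in (0 : ℝ)..R, Real.sinh s ^ (m - 1)) / Real.sinh R ^ (m - 1)

namespace Stmt14Aux

/-- Primitive of `sinh^n`. -/
def N (n : ℕ) (R : ℝ) : ℝ := ∫ s in (0 : ℝ)..R, Real.sinh s ^ n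

/-- The integrand. -/
def g (n : ℕ) (R : ℝ) : ℝ := N n R / Real.sinh R ^ n

lemma hasDerivAt_N (n : ℕ) (R : ℝ) : HasDerivAt (N n) (Real.sinh R ^ n) R :=
  ((Real.continuous_sinh.pow n).integral_hasStrictDerivAt 0 R).hasDerivAt

lemma continuous_N (n : ℕ) : Continuous (N n) := by
  have : Differentiable ℝ (N n) := fun R => (hasDerivAt_N n R).differentiableAt
  exact this.continuous

lemma abs_g_le (n : ℕ) (hn : n ≠ 0) (R : ℝ) : |g n R| ≤ |R| := by
  rcases eq_or_ne (Real.sinh R) 0 with h | h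
  · rw [g, h, zero_pow hn, div_zero, abs_zero]; exact abs_nonneg R
  · have hb : ∀ x ∈ Set.uIoc (0 : ℝ) R, ‖Real.sinh x ^ n‖ ≤ |Real.sinh R| ^ n := by
      intro x hx
      rw [norm_pow, Real.norm_eq_abs]
      refine pow_le_pow_left₀ (abs_nonneg _) ?_ n
      rcases le_total (0 : ℝ) R with hR | hR
      · rw [Set.uIoc_of_le hR] at hx
        rw [abs_of_nonneg (Real.sinh_nonneg_iff.2 hx.1.le),
          abs_of_nonneg (Real.sinh_nonneg_iff.2 hR)]
        exact Real.sinh_le_sinh.2 hx.2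
      · rw [Set.uIoc_of_ge hR] at hx
        rw [abs_of_nonpos (Real.sinh_nonpos_iff.2 hx.2),
          abs_of_nonpos (Real.sinh_nonpos_iff.2 hR)]
        exact neg_le_neg (Real.sinh_le_sinh.2 hx.1.le)
    have := intervalIntegral.norm_integral_le_of_norm_le_const hb
    rw [Real.norm_eq_abs] at this
    have hpos : 0 < |Real.sinh R| ^ n := pow_pos (abs_pos.2 h) n
    rw [g, abs_div, abs_pow, div_le_iff₀ hpos]
    calc |N n R| ≤ |Real.sinh R| ^ n * |R - 0| := this
    _ = |R| * |Real.sinh R| ^ n := by ring_nf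

lemma continuous_g (n : ℕ) (hn : 1 ≤ n) : Continuous (g n) := by
  rw [continuous_iff_continuousAt]
  intro x
  rcases eq_or_ne x 0 with rfl | hx
  · have h0 : g n 0 = 0 := by simp [g, Real.sinh_zero, zero_pow (Nat.one_le_iff_ne_zero.mp hn), N]
    rw [ContinuousAt, h0]
    exact squeeze_zero_norm (fun t => abs_g_le n (Nat.one_le_iff_ne_zero.mp hn) t) (by simpa using (continuous_abs.tendsto (0:ℝ)))
  · exact ((continuous_N n).continuousAt).div
      ((Real.continuous_sinh.pow n).continuousAt)
      (pow_ne_zero n (Real.sinh_ne_zero.2 hx))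

lemma hasDerivAt_g (k : ℕ) {t : ℝ} (ht : t ≠ 0) :
    HasDerivAt (g (k + 1)) (1 - ((k : ℝ) + 1) * coth t * g (k + 1) t) t := by
  have hs : Real.sinh t ≠ 0 := Real.sinh_ne_zero.2 ht
  have hN := hasDerivAt_N (k + 1) t
  have hD : HasDerivAt (fun u => Real.sinh u ^ (k + 1))
      (((k : ℝ) + 1) * Real.sinh t ^ k * Real.cosh t) t := by
    have := (Real.hasDerivAt_sinh t).pow (k + 1)
    refine this.congr_deriv ?_
    simp
  have hdiv := hN.div hD (pow_ne_zero _ hs)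
  refine hdiv.congr_deriv ?_
  symm
  rw [coth, g]
  field_simp
  ring

lemma psi_deriv (k : ℕ) (t : ℝ) :
    HasDerivAt (fun u => Real.sinh u ^ (k + 2) / Real.cosh u - ((k : ℝ) + 1) * N (k + 1) u)
      (Real.sinh t ^ (k + 1) / Real.cosh t ^ 2) t := by
  have hc : Real.cosh t ≠ 0 := (Real.cosh_pos t).ne'
  have htop : HasDerivAt (fun u => Real.sinh u ^ (k + 2))
      (((k : ℝ) + 2) * Real.sinh t ^ (k + 1) * Real.cosh t) t := by
    have := (Real.hasDerivAt_sinh t).pow (k + 2)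
    refine this.congr_deriv ?_
    simp
  have hq := htop.div (Real.hasDerivAt_cosh t) hc
  have hN := (hasDerivAt_N (k + 1) t).const_mul ((k : ℝ) + 1)
  have h := hq.sub hN
  refine h.congr_deriv ?_
  symm
  have key := Real.cosh_sq_sub_sinh_sq t
  field_simp
  linear_combination (-(Real.sinh t * Real.sinh t ^ k)) * key

lemma psi_nonneg (k : ℕ) {t : ℝ} (ht : 0 ≤ t) :
    ((k : ℝ) + 1) * N (k + 1) t ≤ Real.sinh t ^ (k + 2) / Real.cosh t := by
  set ψ : ℝ → ℝ := fun u => Real.sinh u ^ (k + 2) / Real.cosh u - ((k : ℝ) + 1) * N (k + 1) u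
    with hψ
  have hmono : MonotoneOn ψ (Set.Ici 0) := by
    refine monotoneOn_of_deriv_nonneg (convex_Ici 0)
      (fun x _ => ((psi_deriv k x).continuousAt.continuousWithinAt))
      (fun x _ => ((psi_deriv k x).differentiableAt.differentiableWithinAt)) ?_
    intro x hx
    rw [interior_Ici] at hx
    rw [(psi_deriv k x).deriv]
    exact div_nonneg (pow_nonneg (Real.sinh_nonneg_iff.2 hx.le) _) (sq_nonneg _)
  have h0 : ψ 0 = 0 := by
    simp [hψ, N, Real.sinh_zero, Real.cosh_zero, intervalIntegral.integral_same]
  have h2 : (0 : ℝ) ≤ Real.sinh t ^ (k + 2) / Real.cosh t - ((k : ℝ) + 1) * N (k + 1) t := by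
    have := hmono Set.self_mem_Ici ht ht
    rwa [h0] at this
  linarith

lemma deriv_g_nonneg (k : ℕ) {t : ℝ} (ht : 0 < t) :
    0 ≤ 1 - ((k : ℝ) + 1) * coth t * g (k + 1) t := by
  have hsp : 0 < Real.sinh t := Real.sinh_pos_iff.2 ht
  have hcp : 0 < Real.cosh t := Real.cosh_pos t
  have key := psi_nonneg k ht.le
  have eq1 : ((k : ℝ) + 1) * coth t * g (k + 1) t
      = (((k : ℝ) + 1) * Real.cosh t * N (k + 1) t) / Real.sinh t ^ (k + 2) := by
    rw [coth, g, mul_assoc, div_mul_div_comm, mul_div_assoc']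
    congr 1 <;> ring
  rw [sub_nonneg, eq1, div_le_one (pow_pos hsp _)]
  have : ((k : ℝ) + 1) * N (k + 1) t * Real.cosh t ≤ Real.sinh t ^ (k + 2) / Real.cosh t * Real.cosh t :=
    mul_le_mul_of_nonneg_right key hcp.le
  rw [div_mul_cancel₀ _ hcp.ne'] at this
  linarith

end Stmt14Aux

open Stmt14Aux in
/-- for an integer `m ≥ 2`, the function
`f(t) = ∫₀ᵗ ((∫₀ᴿ sinh^{m−1}(s) ds)/sinh^{m−1}(R)) dR` is convex on `(0, +∞)`, its
derivative is `f'(t) = (∫₀ᵗ sinh^{m−1}(s) ds)/sinh^{m−1}(t)`, and it satisfies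
`f''(t) + (m−1) coth(t) f'(t) = 1` for every `t > 0`. -/
theorem statement14 (m : ℕ) (hm : 2 ≤ m) :
    ConvexOn ℝ (Set.Ioi 0) (fmodel m) ∧
    (∀ t : ℝ, 0 < t →
      deriv (fmodel m) t = (∫ s in (0 : ℝ)..t, Real.sinh s ^ (m - 1)) / Real.sinh t ^ (m - 1)) ∧
    (∀ t : ℝ, 0 < t →
      deriv (deriv (fmodel m)) t + ((m : ℝ) - 1) * coth t * deriv (fmodel m) t = 1) := by
  obtain ⟨k, hk⟩ : ∃ k, m - 1 = k + 1 := ⟨m - 2, by omega⟩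
  have hfm : fmodel m = fun t => ∫ R in (0 : ℝ)..t, g (k + 1) R := by
    funext t
    simp only [fmodel, hk, g, N]
  have hder : ∀ t, HasDerivAt (fmodel m) (g (k + 1) t) t := by
    intro t
    rw [hfm]
    exact ((continuous_g (k + 1) (Nat.succ_le_succ k.zero_le)).integral_hasStrictDerivAt
      0 t).hasDerivAt
  have hderiv_eq : deriv (fmodel m) = g (k + 1) := funext fun t => (hder t).deriv
  refine ⟨?_, ?_, ?_⟩
  · refine MonotoneOn.convexOn_of_deriv (convex_Ioi 0)
      (fun x _ => (hder x).continuousAt.continuousWithinAt)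
      (fun x _ => (hder x).differentiableAt.differentiableWithinAt) ?_
    rw [interior_Ioi, hderiv_eq]
    refine monotoneOn_of_deriv_nonneg (convex_Ioi 0)
      (continuous_g (k + 1) (Nat.succ_le_succ k.zero_le)).continuousOn
      (fun x hx => by
        rw [interior_Ioi] at hx
        exact (hasDerivAt_g k (ne_of_gt hx)).differentiableAt.differentiableWithinAt) ?_
    intro x hx
    rw [interior_Ioi] at hx
    rw [(hasDerivAt_g k (ne_of_gt hx)).deriv]
    exact deriv_g_nonneg k hx
  · intro t ht
    rw [hderiv_eq]
    simp only [g, N, hk]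
  · intro t ht
    rw [hderiv_eq, (hasDerivAt_g k (ne_of_gt ht)).deriv]
    have hm' : (m : ℝ) = (k : ℝ) + 2 := by
      have : m = k + 2 := by omega
      rw [this]; push_cast; ring
    rw [hm']
    ring
end
end

section
/- Fix an integer m ≥ 2, a real λ > (m−1)²/4, β = √(λ − (m−1)²/4), ψ(t) = sinh(t)^{−(m−1)/2} e^{iβt}, and for R > 0 let F_R(t) = ψ(t) sin²((2π/R)(t − R/2)) for t > 0. Then for every R > 0 and every η > 0 there exists a C^∞ function υ : ℝ → ℂ with compact support contained in (0, +∞) such that: (i) ∫₀^{∞} |υ''(t) + (m−1) coth(t) υ'(t) + λ υ(t)|² sinh^{m−1}(t) dt ≤ 2 ∫_{R/2}^{R} |F_R''(t) + (m−1) coth(t) F_R'(t) + λ F_R(t)|² sinh^{m−1}(t) dt + η; (ii) ∫_{R/2}^{R} |F_R(t)|² sinh^{m−1}(t) dt ≤ 2 ∫₀^{∞} |υ(t)|² sinh^{m−1}(t) dt; (iii) ∫₀^{∞} |υ'(t)|² sinh^{m−1}(t) dt ≤ 2 ∫_{R/2}^{R} |F_R'(t)|² sinh^{m−1}(t) dt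 + η; and (iv) ∫₀^{∞} |υ''(t)|² sinh^{m−1}(t) dt ≤ 2 ∫_{R/2}^{R} |F_R''(t)|² sinh^{m−1}(t) dt + η. -/
open Filter Set
open scoped Real

noncomputable section

open MeasureTheory intervalIntegral

set_option maxHeartbeats 2000000

local notation "T" => Real.smoothTransition


lemma T_deriv_zero {x : ℝ} (hx : x < 0 ∨ 1 < x) : deriv Real.smoothTransition x = 0 := by
  rcases hx with hx | hx
  · have h : Real.smoothTransition =ᶠ[nhds x] fun _ => (0:ℝ) :=
      Filter.eventuallyEq_of_mem (Iio_mem_nhds hx)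
        (fun y hy => Real.smoothTransition.zero_of_nonpos (le_of_lt hy))
    rw [h.deriv_eq]; exact deriv_const x 0
  · have h : Real.smoothTransition =ᶠ[nhds x] fun _ => (1:ℝ) :=
      Filter.eventuallyEq_of_mem (Ioi_mem_nhds hx)
        (fun y hy => Real.smoothTransition.one_of_one_le (le_of_lt hy))
    rw [h.deriv_eq]; exact deriv_const x 1

lemma T_deriv2_zero {x : ℝ} (hx : x < 0 ∨ 1 < x) : deriv (deriv Real.smoothTransition) x = 0 := by
  have h : deriv Real.smoothTransition =ᶠ[nhds x] fun _ => (0:ℝ) := by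
    rcases hx with hx | hx
    · exact Filter.eventuallyEq_of_mem (Iio_mem_nhds hx) (fun y hy => T_deriv_zero (Or.inl hy))
    · exact Filter.eventuallyEq_of_mem (Ioi_mem_nhds hx) (fun y hy => T_deriv_zero (Or.inr hy))
  rw [h.deriv_eq]; exact deriv_const x 0

lemma T_contDiff_deriv : ContDiff ℝ (⊤ : ℕ∞) (deriv Real.smoothTransition) :=
  (contDiff_infty_iff_deriv.mp Real.smoothTransition.contDiff).2

lemma T_bounds : ∃ K : ℝ, 0 ≤ K ∧ (∀ x, |deriv Real.smoothTransition x| ≤ K) ∧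
    (∀ x, |deriv (deriv Real.smoothTransition) x| ≤ K) := by
  obtain ⟨K1, hK1⟩ := (isCompact_Icc (a := (0:ℝ)) (b := 1)).exists_bound_of_continuousOn
    (T_contDiff_deriv.continuous.continuousOn)
  obtain ⟨K2, hK2⟩ := (isCompact_Icc (a := (0:ℝ)) (b := 1)).exists_bound_of_continuousOn
    ((contDiff_infty_iff_deriv.mp T_contDiff_deriv).2.continuous.continuousOn)
  have hcase : ∀ x : ℝ, x ∉ Icc (0:ℝ) 1 → (x < 0 ∨ 1 < x) := by
    intro x hx
    rcases lt_or_ge x 0 with h | h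
    · exact Or.inl h
    · exact Or.inr (by by_contra hc; exact hx ⟨h, not_lt.mp hc⟩)
  refine ⟨max (max K1 K2) 0, le_max_right _ _, fun x => ?_, fun x => ?_⟩
  · by_cases hx : x ∈ Icc (0:ℝ) 1
    · exact le_trans (hK1 x hx) (le_max_of_le_left (le_max_left _ _))
    · rw [T_deriv_zero (hcase x hx)]; simp
  · by_cases hx : x ∈ Icc (0:ℝ) 1
    · exact le_trans (hK2 x hx) (le_max_of_le_left (le_max_right _ _))
    · rw [T_deriv2_zero (hcase x hx)]; simp

lemma cutoff_bound : ∃ K : ℝ, 0 ≤ K ∧ ∀ ε l r : ℝ, 0 < ε →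
    ∃ χ : ℝ → ℝ, ContDiff ℝ (⊤ : ℕ∞) χ ∧
      (∀ t, 0 ≤ χ t) ∧ (∀ t, χ t ≤ 1) ∧
      (∀ t, t ≤ l → χ t = 0) ∧ (∀ t, r ≤ t → χ t = 0) ∧
      (∀ t, l + ε ≤ t → t ≤ r - ε → χ t = 1) ∧
      (∀ t, |deriv χ t| ≤ K / ε) ∧ (∀ t, |deriv (deriv χ) t| ≤ K / ε ^ 2) := by
  obtain ⟨K, hK0, hK1, hK2⟩ := T_bounds
  refine ⟨2*K + 2*K^2, by positivity, ?_⟩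
  intro ε l r hε
  set u₁ : ℝ → ℝ := fun t => (t - l) / ε with hu₁
  set u₂ : ℝ → ℝ := fun t => (r - t) / ε with hu₂
  have hu₁d : ∀ t, HasDerivAt u₁ (1 / ε) t := by
    intro t; simpa using ((hasDerivAt_id t).sub_const l).div_const ε
  have hu₂d : ∀ t, HasDerivAt u₂ (-(1 / ε)) t := by
    intro t
    have := ((hasDerivAt_const t r).sub (hasDerivAt_id t)).div_const ε
    simpa [neg_div] using this
  set χ : ℝ → ℝ := fun t => T (u₁ t) * T (u₂ t) with hχdef
  have hTd : ∀ x, HasDerivAt T (deriv T x) x := fun x =>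
    ((Real.smoothTransition.contDiff (n := ⊤)).differentiable (by simp) x).hasDerivAt
  have hT1d : ∀ x, HasDerivAt (deriv T) (deriv (deriv T) x) x := fun x =>
    (T_contDiff_deriv.differentiable (by simp) x).hasDerivAt
  have hd1 : ∀ t, HasDerivAt χ
      (deriv T (u₁ t) * (1/ε) * T (u₂ t) + T (u₁ t) * (deriv T (u₂ t) * (-(1/ε)))) t :=
    fun t => (((hTd (u₁ t)).comp t (hu₁d t)).mul ((hTd (u₂ t)).comp t (hu₂d t)))
  have hderiv1 : ∀ t, deriv χ t
      = deriv T (u₁ t) * (1/ε) * T (u₂ t) + T (u₁ t) * (deriv T (u₂ t) * (-(1/ε))) :=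
    fun t => (hd1 t).deriv
  have hd2 : ∀ t, HasDerivAt (deriv χ)
      ((deriv (deriv T) (u₁ t) * (1/ε) * (1/ε)) * T (u₂ t)
          + deriv T (u₁ t) * (1/ε) * (deriv T (u₂ t) * (-(1/ε)))
        + (deriv T (u₁ t) * (1/ε) * (deriv T (u₂ t) * (-(1/ε)))
          + T (u₁ t) * (deriv (deriv T) (u₂ t) * (-(1/ε)) * (-(1/ε))))) t := by
    intro t
    have e1 : HasDerivAt (fun s => deriv T (u₁ s) * (1/ε))
        (deriv (deriv T) (u₁ t) * (1/ε) * (1/ε)) t :=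
      (((hT1d (u₁ t)).comp t (hu₁d t))).mul_const (1/ε)
    have e2 : HasDerivAt (fun s => T (u₂ s)) (deriv T (u₂ t) * (-(1/ε))) t :=
      (hTd (u₂ t)).comp t (hu₂d t)
    have e3 : HasDerivAt (fun s => T (u₁ s)) (deriv T (u₁ t) * (1/ε)) t :=
      (hTd (u₁ t)).comp t (hu₁d t)
    have e4 : HasDerivAt (fun s => deriv T (u₂ s) * (-(1/ε)))
        (deriv (deriv T) (u₂ t) * (-(1/ε)) * (-(1/ε))) t :=
      (((hT1d (u₂ t)).comp t (hu₂d t))).mul_const (-(1/ε))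
    refine HasDerivAt.congr_of_eventuallyEq ((e1.mul e2).add (e3.mul e4)) ?_
    filter_upwards with s
    rw [hderiv1 s]
    rfl
  have habs : ∀ x, |T x| ≤ 1 := fun x => by
    rw [abs_of_nonneg (Real.smoothTransition.nonneg x)]; exact Real.smoothTransition.le_one x
  have habsε : |1/ε| = 1/ε := abs_of_pos (by positivity)
  refine ⟨χ, ?_, ?_, ?_, ?_, ?_, ?_, ?_, ?_⟩
  · exact (Real.smoothTransition.contDiff.comp
      (((contDiff_id).sub contDiff_const).div_const ε)).mul
      (Real.smoothTransition.contDiff.comp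
      (((contDiff_const).sub contDiff_id).div_const ε))
  · exact fun t => mul_nonneg (Real.smoothTransition.nonneg _) (Real.smoothTransition.nonneg _)
  · exact fun t => mul_le_one₀ (Real.smoothTransition.le_one _)
      (Real.smoothTransition.nonneg _) (Real.smoothTransition.le_one _)
  · intro t ht
    have : u₁ t ≤ 0 := div_nonpos_iff.mpr (Or.inr ⟨by linarith, hε.le⟩)
    simp [hχdef, Real.smoothTransition.zero_of_nonpos this]
  · intro t ht
    have : u₂ t ≤ 0 := div_nonpos_iff.mpr (Or.inr ⟨by linarith, hε.le⟩)
    simp [hχdef, Real.smoothTransition.zero_of_nonpos this]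
  · intro t h1 h2
    have e1 : (1:ℝ) ≤ u₁ t := (le_div_iff₀ hε).mpr (by linarith)
    have e2 : (1:ℝ) ≤ u₂ t := (le_div_iff₀ hε).mpr (by linarith)
    simp [hχdef, Real.smoothTransition.one_of_one_le e1, Real.smoothTransition.one_of_one_le e2]
  · intro t
    rw [hderiv1 t]
    have h1 : |deriv T (u₁ t) * (1/ε) * T (u₂ t)| ≤ K * (1/ε) * 1 := by
      rw [abs_mul, abs_mul, habsε]
      gcongr
      · exact hK1 _
      · exact habs _
    have h2 : |T (u₁ t) * (deriv T (u₂ t) * (-(1/ε)))| ≤ 1 * (K * (1/ε)) := by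
      rw [abs_mul, abs_mul, abs_neg, habsε]
      gcongr
      · exact habs _
      · exact hK1 _
    calc |_| ≤ K * (1/ε) * 1 + 1 * (K * (1/ε)) := (abs_add_le _ _).trans (add_le_add h1 h2)
      _ = 2*K/ε := by ring
      _ ≤ (2*K + 2*K^2) / ε := by gcongr; nlinarith [sq_nonneg K]
  · intro t
    rw [(hd2 t).deriv]
    have hb : ∀ x y : ℝ, |x| ≤ K → |y| ≤ 1 → |x * (1/ε) * (1/ε) * y| ≤ K * (1/ε) * (1/ε) := by
      intro x y hx hy
      rw [abs_mul, abs_mul, abs_mul, habsε]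
      calc |x| * (1/ε) * (1/ε) * |y| ≤ K * (1/ε) * (1/ε) * 1 := by gcongr
        _ = K * (1/ε) * (1/ε) := by ring
    have h1 : |deriv (deriv T) (u₁ t) * (1/ε) * (1/ε) * T (u₂ t)| ≤ K * (1/ε) * (1/ε) :=
      hb _ _ (hK2 _) (habs _)
    have h2 : |deriv T (u₁ t) * (1/ε) * (deriv T (u₂ t) * (-(1/ε)))| ≤ (K * (1/ε)) * (K * (1/ε)) := by
      rw [abs_mul, abs_mul, abs_mul, abs_neg, habsε]
      gcongr
      · exact hK1 _
      · exact hK1 _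
    have h4 : |T (u₁ t) * (deriv (deriv T) (u₂ t) * (-(1/ε)) * (-(1/ε)))| ≤ 1 * (K * (1/ε) * (1/ε)) := by
      rw [abs_mul, abs_mul, abs_mul, abs_neg, habsε]
      gcongr
      · exact habs _
      · exact hK2 _
    have step : |(deriv (deriv T) (u₁ t) * (1/ε) * (1/ε)) * T (u₂ t)
          + deriv T (u₁ t) * (1/ε) * (deriv T (u₂ t) * (-(1/ε)))
        + (deriv T (u₁ t) * (1/ε) * (deriv T (u₂ t) * (-(1/ε)))
          + T (u₁ t) * (deriv (deriv T) (u₂ t) * (-(1/ε)) * (-(1/ε))))|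
        ≤ (K * (1/ε) * (1/ε) + (K * (1/ε)) * (K * (1/ε)))
          + ((K * (1/ε)) * (K * (1/ε)) + 1 * (K * (1/ε) * (1/ε))) := by
      refine (abs_add_le _ _).trans (add_le_add ((abs_add_le _ _).trans (add_le_add ?_ h2))
        ((abs_add_le _ _).trans (add_le_add h2 h4)))
      calc |deriv (deriv T) (u₁ t) * (1/ε) * (1/ε) * T (u₂ t)| ≤ K * (1/ε) * (1/ε) := h1
        _ = K * (1/ε) * (1/ε) := rfl
    refine step.trans (le_of_eq ?_)
    field_simp
    ring


lemma key (l r a b Q η : ℝ) (hla : l ≤ a) (hab : a ≤ b) (hbr : b ≤ r) (h0l : 0 < l)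
    (g gF : ℝ → ℝ) (hg : ContinuousOn g (Icc l r))
    (hgsupp : ∀ t, t < l ∨ r < t → g t = 0)
    (hgF : ∀ t ∈ Icc a b, g t = gF t) (hgnn : ∀ t ∈ Icc a b, 0 ≤ g t)
    (hzone : ∀ t ∈ Icc l a, g t ≤ Q) (hzone' : ∀ t ∈ Icc b r, g t ≤ Q)
    (hQ : 0 ≤ Q) (hη : Q * (a - l) + Q * (r - b) ≤ η) :
    ∫ t in Ioi (0:ℝ), g t ≤ 2 * (∫ t in a..b, gF t) + η := by
  have hIcc : IntegrableOn g (Icc l r) := hg.integrableOn_compact isCompact_Icc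
  have hIoi : IntegrableOn g (Ioi 0) := by
    have h1 : IntegrableOn g (Ioi 0 ∩ Icc l r) := hIcc.mono_set inter_subset_right
    have h2 : IntegrableOn g (Ioi 0 \ Icc l r) := by
      rw [integrableOn_congr_fun (g := fun _ => (0:ℝ))
        (fun x hx => by
          rcases hx with ⟨-, hx2⟩
          rcases lt_or_ge x l with h | h
          · exact hgsupp x (Or.inl h)
          · exact hgsupp x (Or.inr (by by_contra hc; exact hx2 ⟨h, not_lt.mp hc⟩)))
        (measurableSet_Ioi.diff measurableSet_Icc)]
      exact integrableOn_zero
    have := h1.union h2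
    rwa [inter_union_diff] at this
  have hst : ∫ t in Ioi (0:ℝ), g t = ∫ t in Icc l r, g t := by
    refine setIntegral_eq_of_subset_of_forall_diff_eq_zero measurableSet_Ioi
      (fun x hx => lt_of_lt_of_le h0l hx.1) (fun x hx => ?_)
    rcases lt_or_ge x l with h | h
    · exact hgsupp x (Or.inl h)
    · exact hgsupp x (Or.inr (by by_contra hc; exact hx.2 ⟨h, not_lt.mp hc⟩))
  have hlr : l ≤ r := le_trans hla (le_trans hab hbr)
  have hIcc' : ∫ t in Icc l r, g t = ∫ t in l..r, g t := by
    rw [integral_of_le hlr, integral_Icc_eq_integral_Ioc]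
  have hila : IntervalIntegrable g volume l a :=
    (intervalIntegrable_iff_integrableOn_Icc_of_le hla).mpr
      (hIcc.mono_set (Icc_subset_Icc le_rfl (le_trans hab hbr)))
  have hiab : IntervalIntegrable g volume a b :=
    (intervalIntegrable_iff_integrableOn_Icc_of_le hab).mpr
      (hIcc.mono_set (Icc_subset_Icc hla hbr))
  have hibr : IntervalIntegrable g volume b r :=
    (intervalIntegrable_iff_integrableOn_Icc_of_le hbr).mpr
      (hIcc.mono_set (Icc_subset_Icc (le_trans hla hab) le_rfl))
  have hsplit : ∫ t in l..r, g t = (∫ t in l..a, g t) + (∫ t in a..b, g t) + ∫ t in b..r, g t := by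
    rw [integral_add_adjacent_intervals hila hiab, integral_add_adjacent_intervals
      (hila.trans hiab) hibr]
  have hmid : ∫ t in a..b, g t = ∫ t in a..b, gF t :=
    integral_congr (fun x hx => hgF x (by rwa [uIcc_of_le hab] at hx))
  have hz1 : ∫ t in l..a, g t ≤ Q * (a - l) := by
    calc ∫ t in l..a, g t ≤ ∫ _t in l..a, Q :=
          integral_mono_on hla hila intervalIntegrable_const hzone
      _ = Q * (a - l) := by rw [intervalIntegral.integral_const, smul_eq_mul]; ring
  have hz2 : ∫ t in b..r, g t ≤ Q * (r - b) := by
    calc ∫ t in b..r, g t ≤ ∫ _t in b..r, Q :=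
          integral_mono_on hbr hibr intervalIntegrable_const hzone'
      _ = Q * (r - b) := by rw [intervalIntegral.integral_const, smul_eq_mul]; ring
  have hmidnn : 0 ≤ ∫ t in a..b, gF t := by
    rw [← hmid]; exact integral_nonneg hab (fun u hu => hgnn u hu)
  rw [hst, hIcc', hsplit, hmid]
  linarith

lemma key2 (a b : ℝ) (hab : a ≤ b) (h0 : 0 < a) (g gF : ℝ → ℝ)
    (hgi : IntegrableOn g (Ioi 0)) (hgnn : ∀ t ∈ Ioi (0:ℝ), 0 ≤ g t)
    (hgF : ∀ t ∈ Icc a b, gF t = g t) :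
    ∫ t in a..b, gF t ≤ 2 * ∫ t in Ioi (0:ℝ), g t := by
  have h1 : ∫ t in a..b, gF t = ∫ t in Ioc a b, g t := by
    rw [integral_of_le hab]
    exact setIntegral_congr_fun measurableSet_Ioc
      (fun x hx => hgF x ⟨hx.1.le, hx.2⟩)
  have h2 : ∫ t in Ioc a b, g t ≤ ∫ t in Ioi (0:ℝ), g t := by
    refine setIntegral_mono_set hgi ((ae_restrict_iff' measurableSet_Ioi).mpr
      (Eventually.of_forall (fun x hx => hgnn x hx))) (HasSubset.Subset.eventuallyLE ?_)
    exact fun x hx => lt_trans h0 hx.1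
  have h3 : 0 ≤ ∫ t in Ioi (0:ℝ), g t :=
    setIntegral_nonneg measurableSet_Ioi (fun x hx => hgnn x hx)
  rw [h1]
  linarith

/-- for an integer `m ≥ 2`, a real `λ > (m−1)²/4`, `β = √(λ − (m−1)²/4)`,
`ψ(t) = sinh(t)^{−(m−1)/2} e^{iβt}` and `F_R(t) = ψ(t) sin²((2π/R)(t − R/2))`: for every
`R > 0` and every `η > 0` there is a smooth compactly supported `υ : ℝ → ℂ` with support
in `(0, +∞)` satisfying the four integral inequalities (i)–(iv). -/
theorem statement16
    (m : ℕ) (hm : 2 ≤ m) (lam : ℝ) (hlam : ((m : ℝ) - 1) ^ 2 / 4 < lam)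
    (β : ℝ) (hβ : β = Real.sqrt (lam - ((m : ℝ) - 1) ^ 2 / 4))
    (ψ : ℝ → ℂ)
    (hψ : ∀ t : ℝ, ψ t =
      ((Real.sinh t ^ (-(((m : ℝ) - 1) / 2)) : ℝ) : ℂ) * Complex.exp (Complex.I * β * t))
    (F : ℝ → ℝ → ℂ)
    (hF : ∀ R t : ℝ, F R t = ψ t * ((Real.sin (2 * π / R * (t - R / 2)) ^ 2 : ℝ) : ℂ)) :
    ∀ R : ℝ, 0 < R → ∀ η : ℝ, 0 < η →
      ∃ υ : ℝ → ℂ, ContDiff ℝ (⊤ : ℕ∞) υ ∧ HasCompactSupport υ ∧ tsupport υ ⊆ Set.Ioi 0 ∧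
        ((∫ t in Set.Ioi (0 : ℝ),
            Norm.norm (deriv (deriv υ) t + ((((m : ℝ) - 1) * coth t : ℝ) : ℂ) * deriv υ t
              + (lam : ℂ) * υ t) ^ 2 * Real.sinh t ^ (m - 1))
          ≤ 2 * (∫ t in (R / 2)..R,
              Norm.norm (deriv (deriv (F R)) t
                + ((((m : ℝ) - 1) * coth t : ℝ) : ℂ) * deriv (F R) t
                + (lam : ℂ) * F R t) ^ 2 * Real.sinh t ^ (m - 1)) + η) ∧
        ((∫ t in (R / 2)..R, Norm.norm (F R t) ^ 2 * Real.sinh t ^ (m - 1))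
          ≤ 2 * ∫ t in Set.Ioi (0 : ℝ), Norm.norm (υ t) ^ 2 * Real.sinh t ^ (m - 1)) ∧
        ((∫ t in Set.Ioi (0 : ℝ), Norm.norm (deriv υ t) ^ 2 * Real.sinh t ^ (m - 1))
          ≤ 2 * (∫ t in (R / 2)..R,
              Norm.norm (deriv (F R) t) ^ 2 * Real.sinh t ^ (m - 1)) + η) ∧
        ((∫ t in Set.Ioi (0 : ℝ), Norm.norm (deriv (deriv υ) t) ^ 2 * Real.sinh t ^ (m - 1))
          ≤ 2 * (∫ t in (R / 2)..R,
              Norm.norm (deriv (deriv (F R)) t) ^ 2 * Real.sinh t ^ (m - 1)) + η) := by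
  intro R hR η hη
  have hπ : 0 < π := Real.pi_pos
  set cR : ℝ := 2 * π / R with hcRdef
  have hcR : 0 < cR := by positivity
  set sq : ℝ → ℝ := fun t => Real.sin (cR * (t - R / 2)) ^ 2 with hsqdef
  set dsq : ℝ → ℝ := fun t =>
    2 * Real.sin (cR * (t - R / 2)) * (Real.cos (cR * (t - R / 2)) * cR) with hdsqdef
  -- smoothness of sq
  have hsqC : ContDiff ℝ (⊤ : ℕ∞) sq := by
    apply ContDiff.pow
    exact Real.contDiff_sin.comp (contDiff_const.mul (contDiff_id.sub contDiff_const))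
  have hsqd : ∀ t, HasDerivAt sq (dsq t) t := by
    intro t
    have hu : HasDerivAt (fun t : ℝ => cR * (t - R / 2)) cR t := by
      simpa using ((hasDerivAt_id t).sub_const (R / 2)).const_mul cR
    have := ((Real.hasDerivAt_sin (cR * (t - R / 2))).comp t hu).fun_pow 2
    simpa [hdsqdef, mul_comm, mul_assoc, mul_left_comm] using this
  -- smoothness of psi on Ioi 0
  have hψS : ContDiffOn ℝ (⊤ : ℕ∞) ψ (Ioi 0) := by
    have h1 : ContDiffOn ℝ (⊤ : ℕ∞)
        (fun t : ℝ => ((Real.sinh t ^ (-(((m : ℝ) - 1) / 2)) : ℝ) : ℂ)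
          * Complex.exp (Complex.I * β * t)) (Ioi 0) := by
      apply ContDiffOn.mul
      · refine Complex.ofRealCLM.contDiff.comp_contDiffOn ?_
        intro t ht
        exact ((Real.contDiff_sinh.contDiffAt).rpow_const_of_ne
          (ne_of_gt (Real.sinh_pos_iff.mpr ht))).contDiffWithinAt
      · have h1 : ContDiff ℝ (⊤ : ℕ∞) (fun t : ℝ => Complex.I * β * t) :=
          contDiff_const.mul Complex.ofRealCLM.contDiff
        have h2 : ContDiff ℂ (⊤ : ℕ∞) Complex.exp := Complex.contDiff_exp
        exact ((h2.restrict_scalars ℝ).comp h1).contDiffOn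
    exact h1.congr (fun t _ => hψ t)
  have hFRdef : F R = fun t => ψ t * ((sq t : ℝ) : ℂ) := funext (fun t => hF R t)
  have hFS : ContDiffOn ℝ (⊤ : ℕ∞) (F R) (Ioi 0) := by
    rw [hFRdef]
    exact hψS.mul (Complex.ofRealCLM.contDiff.comp hsqC).contDiffOn
  have topcast : ((⊤ : ℕ∞) : WithTop ℕ∞) ≠ 0 := by simp
  have hF1S : ContDiffOn ℝ (⊤ : ℕ∞) (deriv (F R)) (Ioi 0) := by
    refine hFS.deriv_of_isOpen isOpen_Ioi ?_
    exact_mod_cast le_top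
  have hψ1S : ContDiffOn ℝ (⊤ : ℕ∞) (deriv ψ) (Ioi 0) := by
    refine hψS.deriv_of_isOpen isOpen_Ioi ?_
    exact_mod_cast le_top
  -- derivative formula for F R on Ioi 0
  have hψd : ∀ t ∈ Ioi (0:ℝ), HasDerivAt ψ (deriv ψ t) t := fun t ht =>
    ((hψS.contDiffAt (Ioi_mem_nhds ht)).differentiableAt topcast).hasDerivAt
  have hFd : ∀ t ∈ Ioi (0:ℝ),
      HasDerivAt (F R) (deriv ψ t * ((sq t : ℝ) : ℂ) + ψ t * ((dsq t : ℝ) : ℂ)) t := by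
    intro t ht
    rw [hFRdef]
    exact (hψd t ht).mul ((hsqd t).ofReal_comp)
  have hdF : ∀ t ∈ Ioi (0:ℝ),
      deriv (F R) t = deriv ψ t * ((sq t : ℝ) : ℂ) + ψ t * ((dsq t : ℝ) : ℂ) :=
    fun t ht => (hFd t ht).deriv
  -- the compact set
  set Kc : Set ℝ := Icc (R/4) (2*R) with hKcdef
  have hKcsub : Kc ⊆ Ioi 0 := fun x hx => lt_of_lt_of_le (by positivity) hx.1
  have hKcmem : R/2 ∈ Kc := ⟨by linarith, by linarith⟩
  -- bounds on Kc
  obtain ⟨Mψ, hMψ⟩ := (isCompact_Icc (a := R/4) (b := 2*R)).exists_bound_of_continuousOn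
    ((hψS.continuousOn).mono hKcsub)
  obtain ⟨Mψ', hMψ'⟩ := (isCompact_Icc (a := R/4) (b := 2*R)).exists_bound_of_continuousOn
    ((hψ1S.continuousOn).mono hKcsub)
  have hF2S : ContDiffOn ℝ (⊤ : ℕ∞) (deriv (deriv (F R))) (Ioi 0) := by
    refine hF1S.deriv_of_isOpen isOpen_Ioi ?_
    exact_mod_cast le_top
  obtain ⟨M2, hM2⟩ := (isCompact_Icc (a := R/4) (b := 2*R)).exists_bound_of_continuousOn
    ((hF2S.continuousOn).mono hKcsub)
  obtain ⟨S, hS⟩ := (isCompact_Icc (a := R/4) (b := 2*R)).exists_bound_of_continuousOn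
    ((Real.continuous_sinh.pow (m-1)).continuousOn)
  have hcothC : ContinuousOn (fun t => ((m:ℝ)-1) * coth t) Kc := by
    refine (continuousOn_const (c := ((m:ℝ)-1))).mul ?_
    exact Real.continuous_cosh.continuousOn.div Real.continuous_sinh.continuousOn
      (fun x hx => ne_of_gt (Real.sinh_pos_iff.mpr (hKcsub hx)))
  obtain ⟨Cc, hCc⟩ := (isCompact_Icc (a := R/4) (b := 2*R)).exists_bound_of_continuousOn hcothC
  have hMψ0 : 0 ≤ Mψ := le_trans (norm_nonneg _) (hMψ _ hKcmem)
  have hMψ'0 : 0 ≤ Mψ' := le_trans (norm_nonneg _) (hMψ' _ hKcmem)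
  have hM20 : 0 ≤ M2 := le_trans (norm_nonneg _) (hM2 _ hKcmem)
  have hS0 : 0 ≤ S := le_trans (norm_nonneg _) (hS _ hKcmem)
  have hCc0 : 0 ≤ Cc := le_trans (norm_nonneg _) (hCc _ hKcmem)
  obtain ⟨K, hK0, hcut⟩ := cutoff_bound
  -- master constants
  set B0 : ℝ := Mψ * (4 * cR^2) with hB0def
  set B1 : ℝ := Mψ' * (4 * cR^2) + Mψ * (4 * cR^2) with hB1def
  set E : ℝ := (M2 + 2*B1*K + B0*K) + (Cc + 1) * (B1 + B0*K) + (|lam| + 1) * B0 + 1 with hEdef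
  set Q : ℝ := E^2 * (S + 1) with hQdef
  have hB00 : 0 ≤ B0 := by positivity
  have hB10 : 0 ≤ B1 := by positivity
  have hE0 : 0 < E := by positivity
  have hQ0 : 0 ≤ Q := by positivity
  -- epsilon
  set ε : ℝ := min (min 1 (R/8)) (η / (4*Q + 4)) with hεdef
  have hε0 : 0 < ε := by
    apply lt_min (lt_min one_pos (by positivity))
    positivity
  have hε1 : ε ≤ 1 := le_trans (min_le_left _ _) (min_le_left _ _)
  have hεR : ε ≤ R/8 := le_trans (min_le_left _ _) (min_le_right _ _)
  have hεη : 4 * ε * Q ≤ η := by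
    have h1 : ε ≤ η / (4*Q + 4) := min_le_right _ _
    have h2 : 0 < 4*Q + 4 := by positivity
    rw [le_div_iff₀ h2] at h1
    nlinarith
  -- the cutoff
  set l : ℝ := R/2 - 2*ε with hldef
  set r : ℝ := R + 2*ε with hrdef
  have h0l : 0 < l := by simp only [hldef]; linarith
  have hlK : R/4 ≤ l := by simp only [hldef]; linarith
  have hrK : r ≤ 2*R := by simp only [hrdef]; linarith
  obtain ⟨χ, hχC, hχ0, hχ1, hχl, hχr, hχmid, hχd1, hχd2⟩ := hcut ε l r hε0
  -- υ
  set υ : ℝ → ℂ := fun t => F R t * ((χ t : ℝ) : ℂ) with hυdef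
  have hυ0 : ∀ t, t ≤ l ∨ r ≤ t → υ t = 0 := by
    intro t ht
    rcases ht with ht | ht
    · simp [hυdef, hχl t ht]
    · simp [hυdef, hχr t ht]
  have hχofC : ContDiff ℝ (⊤ : ℕ∞) (fun t => ((χ t : ℝ) : ℂ)) :=
    Complex.ofRealCLM.contDiff.comp hχC
  have hυC : ContDiff ℝ (⊤ : ℕ∞) υ := by
    rw [contDiff_iff_contDiffAt]
    intro x
    by_cases hx : 0 < x
    · exact (hFS.contDiffAt (Ioi_mem_nhds hx)).mul hχofC.contDiffAt
    · refine (contDiffAt_const (c := (0:ℂ))).congr_of_eventuallyEq ?_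
      refine eventuallyEq_of_mem (Iio_mem_nhds (lt_of_le_of_lt (not_lt.mp hx) h0l)) ?_
      exact fun y hy => hυ0 y (Or.inl (le_of_lt hy))
  have hυCS : HasCompactSupport υ :=
    HasCompactSupport.intro (isCompact_Icc (a := l) (b := r))
      (fun x hx => hυ0 x (by
        rcases lt_or_ge x l with h | h
        · exact Or.inl h.le
        · exact Or.inr (le_of_lt (by by_contra hc; exact hx ⟨h, not_lt.mp hc⟩))))
  have hυsupp : tsupport υ ⊆ Ioi 0 := by
    refine subset_trans (closure_minimal (Function.support_subset_iff'.mpr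
      (fun x hx => hυ0 x (by
        rcases lt_or_ge x l with h | h
        · exact Or.inl h.le
        · exact Or.inr (le_of_lt (by by_contra hc; exact hx ⟨h, not_lt.mp hc⟩))))) isClosed_Icc) ?_
    exact fun x hx => lt_of_lt_of_le h0l hx.1
  -- derivatives of χ
  have hχd : ∀ t, HasDerivAt χ (deriv χ t) t := fun t =>
    ((hχC.differentiable topcast) t).hasDerivAt
  have hχC1 : ContDiff ℝ (⊤ : ℕ∞) (deriv χ) := (contDiff_infty_iff_deriv.mp hχC).2
  have hχd' : ∀ t, HasDerivAt (deriv χ) (deriv (deriv χ) t) t := fun t =>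
    ((hχC1.differentiable topcast) t).hasDerivAt
  -- derivative formulas for υ on Ioi 0
  have hυd : ∀ t ∈ Ioi (0:ℝ), HasDerivAt υ
      (deriv (F R) t * ((χ t : ℝ):ℂ) + F R t * ((deriv χ t : ℝ):ℂ)) t := by
    intro t ht
    have h1 : HasDerivAt (F R) (deriv (F R) t) t :=
      ((hFS.contDiffAt (Ioi_mem_nhds ht)).differentiableAt topcast).hasDerivAt
    exact h1.mul ((hχd t).ofReal_comp)
  have hυd1 : ∀ t ∈ Ioi (0:ℝ),
      deriv υ t = deriv (F R) t * ((χ t : ℝ):ℂ) + F R t * ((deriv χ t:ℝ):ℂ) :=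
    fun t ht => (hυd t ht).deriv
  have hυd2 : ∀ t ∈ Ioi (0:ℝ), deriv (deriv υ) t
      = (deriv (deriv (F R)) t * ((χ t:ℝ):ℂ) + deriv (F R) t * ((deriv χ t:ℝ):ℂ))
        + (deriv (F R) t * ((deriv χ t:ℝ):ℂ) + F R t * ((deriv (deriv χ) t:ℝ):ℂ)) := by
    intro t ht
    have hev : deriv υ =ᶠ[nhds t]
        (fun s => deriv (F R) s * ((χ s:ℝ):ℂ) + F R s * ((deriv χ s:ℝ):ℂ)) :=
      eventuallyEq_of_mem (Ioi_mem_nhds ht) (fun s hs => hυd1 s hs)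
    rw [hev.deriv_eq]
    have h1 : HasDerivAt (deriv (F R)) (deriv (deriv (F R)) t) t :=
      ((hF1S.contDiffAt (Ioi_mem_nhds ht)).differentiableAt topcast).hasDerivAt
    have h2 : HasDerivAt (F R) (deriv (F R) t) t :=
      ((hFS.contDiffAt (Ioi_mem_nhds ht)).differentiableAt topcast).hasDerivAt
    exact ((h1.mul ((hχd t).ofReal_comp)).add (h2.mul ((hχd' t).ofReal_comp))).deriv
  -- υ agrees with F on a neighborhood of [R/2, R]
  have hone : ∀ s ∈ Ioo (R/2 - ε) (R + ε), υ s = F R s := by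
    intro s hs
    have h1 : χ s = 1 := hχmid s (by simp only [hldef]; linarith [hs.1])
      (by simp only [hrdef]; linarith [hs.2])
    simp [hυdef, h1]
  have hmemIoo : ∀ t ∈ Icc (R/2) R, t ∈ Ioo (R/2 - ε) (R + ε) := by
    intro t ht
    exact ⟨by linarith [ht.1], by linarith [ht.2]⟩
  have hmidυ : ∀ t ∈ Icc (R/2) R, υ t = F R t := fun t ht => hone t (hmemIoo t ht)
  have hmidυ1 : ∀ t ∈ Icc (R/2) R, deriv υ t = deriv (F R) t := by
    intro t ht
    exact (eventuallyEq_of_mem (Ioo_mem_nhds (hmemIoo t ht).1 (hmemIoo t ht).2) hone).deriv_eq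
  have hmidυ2 : ∀ t ∈ Icc (R/2) R, deriv (deriv υ) t = deriv (deriv (F R)) t := by
    intro t ht
    have h1 : ∀ s ∈ Ioo (R/2 - ε) (R + ε), deriv υ s = deriv (F R) s := by
      intro s hs
      exact (eventuallyEq_of_mem (Ioo_mem_nhds hs.1 hs.2) hone).deriv_eq
    exact (eventuallyEq_of_mem (Ioo_mem_nhds (hmemIoo t ht).1 (hmemIoo t ht).2) h1).deriv_eq
  -- vanishing outside [l, r]
  have hlocal : ∀ t : ℝ, t < l ∨ r < t →
      υ t = 0 ∧ deriv υ t = 0 ∧ deriv (deriv υ) t = 0 := by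
    have hz1 : ∀ s : ℝ, s < l ∨ r < s → deriv υ s = 0 := by
      intro s hs
      rcases hs with hs | hs
      · have : υ =ᶠ[nhds s] (fun _ => (0:ℂ)) :=
          eventuallyEq_of_mem (Iio_mem_nhds hs) (fun y hy => hυ0 y (Or.inl (le_of_lt hy)))
        rw [this.deriv_eq]; exact deriv_const s 0
      · have : υ =ᶠ[nhds s] (fun _ => (0:ℂ)) :=
          eventuallyEq_of_mem (Ioi_mem_nhds hs) (fun y hy => hυ0 y (Or.inr (le_of_lt hy)))
        rw [this.deriv_eq]; exact deriv_const s 0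
    intro t ht
    refine ⟨?_, hz1 t ht, ?_⟩
    · rcases ht with ht | ht
      · exact hυ0 t (Or.inl ht.le)
      · exact hυ0 t (Or.inr ht.le)
    · rcases ht with ht | ht
      · have : deriv υ =ᶠ[nhds t] (fun _ => (0:ℂ)) :=
          eventuallyEq_of_mem (Iio_mem_nhds ht) (fun y hy => hz1 y (Or.inl hy))
        rw [this.deriv_eq]; exact deriv_const t 0
      · have : deriv υ =ᶠ[nhds t] (fun _ => (0:ℂ)) :=
          eventuallyEq_of_mem (Ioi_mem_nhds ht) (fun y hy => hz1 y (Or.inr hy))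
        rw [this.deriv_eq]; exact deriv_const t 0
  -- sine vanishing bound
  have hsinb : ∀ p t : ℝ, Real.sin (cR * (p - R/2)) = 0 →
      |Real.sin (cR * (t - R/2))| ≤ cR * |t - p| := by
    intro p t hp
    have h1 : cR * (t - R/2) = cR * (t - p) + cR * (p - R/2) := by ring
    rw [h1, Real.sin_add, hp, mul_zero, add_zero, abs_mul]
    calc |Real.sin (cR*(t-p))| * |Real.cos (cR*(p-R/2))| ≤ |cR*(t-p)| * 1 :=
          mul_le_mul Real.abs_sin_le_abs (Real.abs_cos_le_one _) (abs_nonneg _) (abs_nonneg _)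
      _ = cR * |t-p| := by rw [mul_one, abs_mul, abs_of_pos hcR]
  -- zone bounds on F
  have hzoneF : ∀ p t : ℝ, Real.sin (cR * (p - R/2)) = 0 → t ∈ Kc → |t - p| ≤ 2*ε →
      Norm.norm (F R t) ≤ B0 * ε^2 ∧ Norm.norm (deriv (F R) t) ≤ B1 * ε := by
    intro p t hp htK htp
    have hsb : |Real.sin (cR * (t - R/2))| ≤ cR * (2*ε) := by
      refine le_trans (hsinb p t hp) ?_
      exact mul_le_mul_of_nonneg_left htp hcR.le
    have hsq2 : |sq t| ≤ (cR * (2*ε))^2 := by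
      rw [hsqdef]
      simp only [abs_pow]
      exact pow_le_pow_left₀ (abs_nonneg _) hsb 2
    have hdsq2 : |dsq t| ≤ 2 * (cR * (2*ε)) * cR := by
      rw [hdsqdef]
      simp only [abs_mul]
      rw [abs_two, abs_of_pos hcR]
      calc 2 * |Real.sin (cR*(t-R/2))| * (|Real.cos (cR*(t-R/2))| * cR)
          ≤ 2 * (cR * (2*ε)) * (1 * cR) := by
            gcongr <;> first | exact hsb | exact Real.abs_cos_le_one _
        _ = 2 * (cR * (2*ε)) * cR := by ring
    have hFval : Norm.norm (F R t) = Norm.norm (ψ t) * |sq t| := by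
      rw [hF R t, norm_mul, Complex.norm_real, Real.norm_eq_abs]
    have hψb : Norm.norm (ψ t) ≤ Mψ := hMψ t htK
    have hψ'b : Norm.norm (deriv ψ t) ≤ Mψ' := hMψ' t htK
    constructor
    · rw [hFval]
      calc Norm.norm (ψ t) * |sq t| ≤ Mψ * (cR * (2*ε))^2 :=
            mul_le_mul hψb hsq2 (abs_nonneg _) hMψ0
        _ = B0 * ε^2 := by rw [hB0def]; ring
    · rw [hdF t (hKcsub htK)]
      calc Norm.norm (deriv ψ t * ((sq t:ℝ):ℂ) + ψ t * ((dsq t:ℝ):ℂ))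
          ≤ Norm.norm (deriv ψ t) * |sq t| + Norm.norm (ψ t) * |dsq t| := by
            refine le_trans (norm_add_le _ _) ?_
            rw [norm_mul, norm_mul, Complex.norm_real, Complex.norm_real, Real.norm_eq_abs, Real.norm_eq_abs]
        _ ≤ Mψ' * (cR * (2*ε))^2 + Mψ * (2 * (cR * (2*ε)) * cR) :=
            add_le_add (mul_le_mul hψ'b hsq2 (abs_nonneg _) hMψ'0)
              (mul_le_mul hψb hdsq2 (abs_nonneg _) hMψ0)
        _ = Mψ' * (4*cR^2) * ε^2 + Mψ * (4*cR^2) * ε := by ring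
        _ ≤ Mψ' * (4*cR^2) * ε + Mψ * (4*cR^2) * ε := by
            have h1 : ε^2 ≤ ε := by nlinarith
            have h2 : (0:ℝ) ≤ Mψ' * (4*cR^2) := by positivity
            nlinarith [mul_le_mul_of_nonneg_left h1 h2]
        _ = B1 * ε := by rw [hB1def]; ring
  -- zone bounds on υ and its derivatives
  have hzoneυ : ∀ p t : ℝ, Real.sin (cR * (p - R/2)) = 0 → t ∈ Kc → |t - p| ≤ 2*ε →
      Norm.norm (υ t) ≤ B0 ∧ Norm.norm (deriv υ t) ≤ B1 + B0*K ∧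
      Norm.norm (deriv (deriv υ) t) ≤ M2 + 2*B1*K + B0*K := by
    intro p t hp htK htp
    have ht0 : t ∈ Ioi (0:ℝ) := hKcsub htK
    obtain ⟨hF0, hF1⟩ := hzoneF p t hp htK htp
    have hχa : |χ t| ≤ 1 := by
      rw [abs_of_nonneg (hχ0 t)]; exact hχ1 t
    have hF2b : Norm.norm (deriv (deriv (F R)) t) ≤ M2 := hM2 t htK
    have hεne : (ε:ℝ) ≠ 0 := ne_of_gt hε0
    constructor
    · calc Norm.norm (υ t) = Norm.norm (F R t) * |χ t| := by
            rw [hυdef]; rw [norm_mul, Complex.norm_real, Real.norm_eq_abs]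
        _ ≤ (B0 * ε^2) * 1 := mul_le_mul hF0 hχa (abs_nonneg _) (by positivity)
        _ = B0 * ε^2 := mul_one _
        _ ≤ B0 * 1 := by
            have h1 : ε^2 ≤ 1 := pow_le_one₀ hε0.le hε1
            exact mul_le_mul_of_nonneg_left h1 hB00
        _ = B0 := mul_one _
    constructor
    · rw [hυd1 t ht0]
      calc Norm.norm (deriv (F R) t * ((χ t:ℝ):ℂ) + F R t * ((deriv χ t:ℝ):ℂ))
          ≤ Norm.norm (deriv (F R) t) * |χ t| + Norm.norm (F R t) * |deriv χ t| := by
            refine le_trans (norm_add_le _ _) ?_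
            rw [norm_mul, norm_mul, Complex.norm_real, Complex.norm_real, Real.norm_eq_abs, Real.norm_eq_abs]
        _ ≤ (B1 * ε) * 1 + (B0 * ε^2) * (K / ε) :=
            add_le_add (mul_le_mul hF1 hχa (abs_nonneg _) (by positivity))
              (mul_le_mul hF0 (hχd1 t) (abs_nonneg _) (by positivity))
        _ = B1 * ε + B0 * K * ε := by field_simp
        _ ≤ B1 + B0*K := by
            have h1 : (0:ℝ) ≤ B1 + B0*K := by positivity
            linarith [mul_le_mul_of_nonneg_left hε1 h1]
    · rw [hυd2 t ht0]
      have e1 : Norm.norm (deriv (deriv (F R)) t * ((χ t:ℝ):ℂ)) ≤ M2 := by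
        rw [norm_mul, Complex.norm_real, Real.norm_eq_abs]
        calc Norm.norm (deriv (deriv (F R)) t) * |χ t| ≤ M2 * 1 :=
              mul_le_mul hF2b hχa (abs_nonneg _) hM20
          _ = M2 := mul_one _
      have e2 : Norm.norm (deriv (F R) t * ((deriv χ t:ℝ):ℂ)) ≤ B1 * K := by
        rw [norm_mul, Complex.norm_real, Real.norm_eq_abs]
        calc Norm.norm (deriv (F R) t) * |deriv χ t| ≤ (B1 * ε) * (K / ε) :=
              mul_le_mul hF1 (hχd1 t) (abs_nonneg _) (by positivity)
          _ = B1 * K := by field_simp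
      have e3 : Norm.norm (F R t * ((deriv (deriv χ) t:ℝ):ℂ)) ≤ B0 * K := by
        rw [norm_mul, Complex.norm_real, Real.norm_eq_abs]
        calc Norm.norm (F R t) * |deriv (deriv χ) t| ≤ (B0 * ε^2) * (K / ε^2) :=
              mul_le_mul hF0 (hχd2 t) (abs_nonneg _) (by positivity)
          _ = B0 * K := by field_simp
      calc Norm.norm ((deriv (deriv (F R)) t * ((χ t:ℝ):ℂ) + deriv (F R) t * ((deriv χ t:ℝ):ℂ))
            + (deriv (F R) t * ((deriv χ t:ℝ):ℂ) + F R t * ((deriv (deriv χ) t:ℝ):ℂ)))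
          ≤ (M2 + B1*K) + (B1*K + B0*K) :=
            le_trans (norm_add_le _ _)
              (add_le_add (le_trans (norm_add_le _ _) (add_le_add e1 e2))
                (le_trans (norm_add_le _ _) (add_le_add e2 e3)))
        _ = M2 + 2*B1*K + B0*K := by ring
  -- sine zeros at the endpoints
  have hpa : Real.sin (cR * (R/2 - R/2)) = 0 := by simp
  have hpb : Real.sin (cR * (R - R/2)) = 0 := by
    have h1 : cR * (R - R/2) = π := by
      rw [hcRdef]; field_simp; ring
    rw [h1, Real.sin_pi]
  -- zone memberships
  have hzmemL : ∀ t ∈ Icc l (R/2), t ∈ Kc ∧ |t - R/2| ≤ 2*ε := by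
    intro t ht
    obtain ⟨h1, h2⟩ := ht
    rw [hldef] at h1
    refine ⟨Set.mem_Icc.mpr ⟨by linarith, by linarith⟩, ?_⟩
    rw [abs_le]; exact ⟨by linarith, by linarith⟩
  have hzmemR : ∀ t ∈ Icc R r, t ∈ Kc ∧ |t - R| ≤ 2*ε := by
    intro t ht
    obtain ⟨h1, h2⟩ := ht
    rw [hrdef] at h2
    refine ⟨Set.mem_Icc.mpr ⟨by linarith, by linarith⟩, ?_⟩
    rw [abs_le]; exact ⟨by linarith, by linarith⟩
  -- master bound
  have q1 : (0:ℝ) ≤ B0*K := mul_nonneg hB00 hK0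
  have q2 : (0:ℝ) ≤ B1*K := mul_nonneg hB10 hK0
  have q3 : (0:ℝ) ≤ Cc*(B1+B0*K) := mul_nonneg hCc0 (by linarith)
  have q4 : (0:ℝ) ≤ |lam| * B0 := mul_nonneg (abs_nonneg _) hB00
  have hEexp : E = M2 + 2*(B1*K) + B0*K + Cc*(B1+B0*K) + (B1+B0*K) + |lam| * B0 + B0 + 1 := by
    rw [hEdef]; ring
  have hEbound : ∀ p t : ℝ, Real.sin (cR * (p - R/2)) = 0 → t ∈ Kc → |t - p| ≤ 2*ε →
      Norm.norm (deriv (deriv υ) t + ((((m:ℝ)-1) * coth t : ℝ):ℂ) * deriv υ t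
        + (lam:ℂ) * υ t) ≤ E
      ∧ Norm.norm (deriv υ t) ≤ E ∧ Norm.norm (deriv (deriv υ) t) ≤ E
      ∧ Norm.norm (υ t) ≤ E := by
    intro p t hp htK htp
    obtain ⟨h0, h1, h2⟩ := hzoneυ p t hp htK htp
    have hc : |((m:ℝ)-1) * coth t| ≤ Cc := by
      have := hCc t htK
      rwa [Real.norm_eq_abs] at this
    have hmidb : Norm.norm (((((m:ℝ)-1) * coth t : ℝ)):ℂ) * Norm.norm (deriv υ t)
        ≤ Cc * (B1 + B0*K) := by
      rw [Complex.norm_real, Real.norm_eq_abs]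
      exact mul_le_mul hc h1 (norm_nonneg _) hCc0
    have hlamb : Norm.norm ((lam:ℂ)) * Norm.norm (υ t) ≤ |lam| * B0 := by
      rw [Complex.norm_real, Real.norm_eq_abs]
      exact mul_le_mul le_rfl h0 (norm_nonneg _) (abs_nonneg _)
    refine ⟨?_, by linarith, by linarith, by linarith⟩
    calc Norm.norm (deriv (deriv υ) t + ((((m:ℝ)-1) * coth t : ℝ):ℂ) * deriv υ t
          + (lam:ℂ) * υ t)
        ≤ Norm.norm (deriv (deriv υ) t)
          + Norm.norm (((((m:ℝ)-1) * coth t : ℝ)):ℂ) * Norm.norm (deriv υ t)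
          + Norm.norm ((lam:ℂ)) * Norm.norm (υ t) := by
          refine le_trans (norm_add_le _ _) (add_le_add (le_trans (norm_add_le _ _)
            (add_le_add le_rfl (le_of_eq (norm_mul _ _)))) (le_of_eq (norm_mul _ _)))
      _ ≤ (M2 + 2*B1*K + B0*K) + Cc*(B1+B0*K) + |lam| * B0 :=
          add_le_add (add_le_add h2 hmidb) hlamb
      _ ≤ E := by rw [hEexp]; linarith
  have hQbound : ∀ (x : ℂ) (t : ℝ), Norm.norm x ≤ E → t ∈ Kc →
      Norm.norm x ^ 2 * Real.sinh t ^ (m-1) ≤ Q := by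
    intro x t hx htK
    have h1 : Real.sinh t ^ (m-1) ≤ S + 1 := by
      have h2 := hS t htK
      rw [Real.norm_eq_abs, Pi.pow_apply] at h2
      linarith [le_abs_self (Real.sinh t ^ (m-1))]
    have h2 : (0:ℝ) ≤ Real.sinh t ^ (m-1) :=
      pow_nonneg (Real.sinh_pos_iff.mpr (hKcsub htK)).le _
    calc Norm.norm x ^2 * Real.sinh t ^ (m-1) ≤ E^2 * (S+1) :=
          mul_le_mul (pow_le_pow_left₀ (norm_nonneg x) hx 2) h1 h2 (by positivity)
      _ = Q := by rw [hQdef]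
  -- endpoints
  have hla : l ≤ R/2 := by rw [hldef]; linarith
  have hab : R/2 ≤ R := by linarith
  have hbr : R ≤ r := by rw [hrdef]; linarith
  have hηQ : Q * (R/2 - l) + Q * (r - R) ≤ η := by
    have h1 : Q * (R/2 - l) + Q * (r - R) = 4*ε*Q := by rw [hldef, hrdef]; ring
    rw [h1]; exact hεη
  -- continuity facts
  have hυcont : Continuous υ := hυC.continuous
  have hυ1C : ContDiff ℝ (⊤ : ℕ∞) (deriv υ) := (contDiff_infty_iff_deriv.mp hυC).2
  have hυ1cont : Continuous (deriv υ) := hυ1C.continuous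
  have hυ2cont : Continuous (deriv (deriv υ)) := (contDiff_infty_iff_deriv.mp hυ1C).2.continuous
  have hsinhpow : Continuous (fun t : ℝ => Real.sinh t ^ (m-1)) := Real.continuous_sinh.pow _
  have hcothIcc : ContinuousOn (fun t => ((((m:ℝ)-1) * coth t : ℝ) : ℂ)) (Icc l r) := by
    refine Complex.continuous_ofReal.comp_continuousOn ?_
    refine (continuousOn_const (c := ((m:ℝ)-1))).mul ?_
    exact Real.continuous_cosh.continuousOn.div Real.continuous_sinh.continuousOn
      (fun x hx => ne_of_gt (Real.sinh_pos_iff.mpr (lt_of_lt_of_le h0l hx.1)))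
  refine ⟨υ, hυC, hυCS, hυsupp, ?_, ?_, ?_, ?_⟩
  · -- (i)
    refine key l r (R/2) R Q η hla hab hbr h0l _ _ ?_ ?_ ?_ ?_ ?_ ?_ hQ0 hηQ
    · refine ContinuousOn.mul ?_ hsinhpow.continuousOn
      refine ContinuousOn.pow ?_ 2
      refine continuous_norm.comp_continuousOn ?_
      exact ((hυ2cont.continuousOn.add (hcothIcc.mul hυ1cont.continuousOn)).add
        ((continuous_const.mul hυcont).continuousOn))
    · intro t ht
      obtain ⟨e0, e1, e2⟩ := hlocal t ht
      simp [e0, e1, e2]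
    · intro t ht
      rw [hmidυ t ht, hmidυ1 t ht, hmidυ2 t ht]
    · intro t ht
      exact mul_nonneg (pow_nonneg (norm_nonneg _) _)
        (pow_nonneg (Real.sinh_pos_iff.mpr (by linarith [ht.1])).le _)
    · intro t ht
      obtain ⟨htK, htp⟩ := hzmemL t ht
      exact hQbound _ t (hEbound (R/2) t hpa htK htp).1 htK
    · intro t ht
      obtain ⟨htK, htp⟩ := hzmemR t ht
      exact hQbound _ t (hEbound R t hpb htK htp).1 htK
  · -- (ii)
    refine key2 (R/2) R hab (by linarith) _ _ ?_ ?_ ?_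
    · have hgc : Continuous (fun t => Norm.norm (υ t) ^ 2 * Real.sinh t ^ (m-1)) :=
        ((continuous_norm.comp hυcont).pow 2).mul hsinhpow
      have hgcs : HasCompactSupport (fun t => Norm.norm (υ t) ^ 2 * Real.sinh t ^ (m-1)) := by
        refine HasCompactSupport.intro (isCompact_Icc (a := l) (b := r)) ?_
        intro x hx
        have h0 : υ x = 0 := hυ0 x (by
          rcases lt_or_ge x l with h | h
          · exact Or.inl h.le
          · exact Or.inr (le_of_lt (by by_contra hc; exact hx ⟨h, not_lt.mp hc⟩)))
        simp [h0]
      exact (hgc.integrable_of_hasCompactSupport hgcs).integrableOn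
    · intro t ht
      exact mul_nonneg (pow_nonneg (norm_nonneg _) _)
        (pow_nonneg (Real.sinh_pos_iff.mpr ht).le _)
    · intro t ht
      rw [hmidυ t ht]
  · -- (iii)
    refine key l r (R/2) R Q η hla hab hbr h0l _ _ ?_ ?_ ?_ ?_ ?_ ?_ hQ0 hηQ
    · exact (((continuous_norm.comp hυ1cont).pow 2).mul hsinhpow).continuousOn
    · intro t ht
      obtain ⟨e0, e1, e2⟩ := hlocal t ht
      simp [e1]
    · intro t ht
      rw [hmidυ1 t ht]
    · intro t ht
      exact mul_nonneg (pow_nonneg (norm_nonneg _) _)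
        (pow_nonneg (Real.sinh_pos_iff.mpr (by linarith [ht.1])).le _)
    · intro t ht
      obtain ⟨htK, htp⟩ := hzmemL t ht
      exact hQbound _ t (hEbound (R/2) t hpa htK htp).2.1 htK
    · intro t ht
      obtain ⟨htK, htp⟩ := hzmemR t ht
      exact hQbound _ t (hEbound R t hpb htK htp).2.1 htK
  · -- (iv)
    refine key l r (R/2) R Q η hla hab hbr h0l _ _ ?_ ?_ ?_ ?_ ?_ ?_ hQ0 hηQ
    · exact (((continuous_norm.comp hυ2cont).pow 2).mul hsinhpow).continuousOn
    · intro t ht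
      obtain ⟨e0, e1, e2⟩ := hlocal t ht
      simp [e2]
    · intro t ht
      rw [hmidυ2 t ht]
    · intro t ht
      exact mul_nonneg (pow_nonneg (norm_nonneg _) _)
        (pow_nonneg (Real.sinh_pos_iff.mpr (by linarith [ht.1])).le _)
    · intro t ht
      obtain ⟨htK, htp⟩ := hzmemL t ht
      exact hQbound _ t (hEbound (R/2) t hpa htK htp).2.2.1 htK
    · intro t ht
      obtain ⟨htK, htp⟩ := hzmemR t ht
      exact hQbound _ t (hEbound R t hpb htK htp).2.2.1 htK
end
end

section
/- For every integer m ≥ 2, every real λ > (m−1)²/4, and every ε > 0, there exists a C^∞ function υ : ℝ → ℂ with compact support contained in (0, +∞) such that ∫₀^{∞} |υ(t)|² sinh^{m−1}(t) dt > 0 and ∫₀^{∞} |υ''(t) + (m−1) coth(t) υ'(t) + λ υ(t)|² sinh^{m−1}(t) dt ≤ ε ∫₀^{∞} |υ(t)|² sinh^{m−1}(t) dt. -/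
open Filter Set
open scoped Real

noncomputable section

set_option maxHeartbeats 1000000 in
open MeasureTheory Metric in
private lemma aux_delta_eq {t : ℝ} (ht : 0 < t) :
    coth t - 1 = Real.exp (-t) / Real.sinh t := by
  have hs : Real.sinh t ≠ 0 := (Real.sinh_pos_iff.2 ht).ne'
  rw [coth, div_sub_one hs, Real.cosh_eq, Real.sinh_eq]
  congr 1
  ring

private lemma aux_delta_nonneg {t : ℝ} (ht : 1 ≤ t) : 0 ≤ coth t - 1 := by
  have ht0 : (0:ℝ) < t := by linarith
  rw [aux_delta_eq ht0]
  positivity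

private lemma aux_delta_le {t : ℝ} (ht : 1 ≤ t) : coth t - 1 ≤ Real.exp (-t) := by
  have ht0 : (0:ℝ) < t := by linarith
  rw [aux_delta_eq ht0]
  have h1 : (1:ℝ) ≤ Real.sinh t := le_trans ht (Real.self_lt_sinh_iff.2 ht0).le
  calc Real.exp (-t) / Real.sinh t ≤ Real.exp (-t) / 1 := by
        apply div_le_div_of_nonneg_left (Real.exp_nonneg _) one_pos h1
    _ = Real.exp (-t) := by ring

private lemma aux_exp_neg_le_inv {R : ℝ} (hR : 1 ≤ R) : Real.exp (-R) ≤ R⁻¹ := by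
  have hR0 : (0:ℝ) < R := by linarith
  have h1 : R ≤ Real.exp R := by
    have := Real.add_one_le_exp R; linarith
  rw [Real.exp_neg]
  exact inv_anti₀ hR0 h1

private lemma aux_exp_neg_le_one {t : ℝ} (ht : 0 ≤ t) : Real.exp (-t) ≤ 1 := by
  rw [show (1:ℝ) = Real.exp 0 from (Real.exp_zero).symm]
  exact Real.exp_le_exp.2 (by linarith)

/-- the weight `e^{-t} sinh t` lies in `[0, 1]` for `t ≥ 0`. -/
private lemma aux_weight_eq (t : ℝ) :
    Real.exp (-t) * Real.sinh t = (1 - Real.exp (-(2*t))) / 2 := by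
  rw [Real.sinh_eq]
  have h : Real.exp (-t) * Real.exp t = 1 := by
    rw [← Real.exp_add]; simp
  have h2 : Real.exp (-t) * Real.exp (-t) = Real.exp (-(2*t)) := by
    rw [← Real.exp_add]; ring_nf
  field_simp
  have h3 : Real.exp (-(t*2)) = Real.exp (-(2*t)) := by ring_nf
  linear_combination h - h2 + h3

private lemma aux_weight_mem {t : ℝ} (ht : 0 ≤ t) :
    0 ≤ Real.exp (-t) * Real.sinh t ∧ Real.exp (-t) * Real.sinh t ≤ 1 := by
  rw [aux_weight_eq]
  have h1 : Real.exp (-(2*t)) ≤ 1 := aux_exp_neg_le_one (by linarith)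
  have h2 : 0 ≤ Real.exp (-(2*t)) := Real.exp_nonneg _
  constructor <;> [linarith; linarith]

private lemma aux_weight_ge {t : ℝ} (ht : 2 ≤ t) :
    (2/5 : ℝ) ≤ Real.exp (-t) * Real.sinh t := by
  rw [aux_weight_eq]
  have h4 : (5:ℝ) ≤ Real.exp 4 := by have := Real.add_one_le_exp (4:ℝ); linarith
  have h1 : Real.exp (-(2*t)) ≤ Real.exp (-4 : ℝ) := Real.exp_le_exp.2 (by linarith)
  have h2 : Real.exp (-4:ℝ) ≤ 1/5 := by
    rw [Real.exp_neg]
    rw [inv_le_iff_one_le_mul₀ (by positivity)]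
    linarith
  linarith


open MeasureTheory Metric

set_option maxHeartbeats 1000000

/-- for every integer `m ≥ 2`, every real `λ > (m−1)²/4` and every `ε > 0`,
there is a smooth compactly supported `υ : ℝ → ℂ` with support in `(0, +∞)` such that
`∫₀^∞ |υ|² sinh^{m−1} > 0` and
`∫₀^∞ |υ'' + (m−1) coth(t) υ' + λυ|² sinh^{m−1} ≤ ε ∫₀^∞ |υ|² sinh^{m−1}`. -/
theorem statement17
    (m : ℕ) (hm : 2 ≤ m) (lam : ℝ) (hlam : ((m : ℝ) - 1) ^ 2 / 4 < lam)
    (ε : ℝ) (hε : 0 < ε) :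
    ∃ υ : ℝ → ℂ, ContDiff ℝ (⊤ : ℕ∞) υ ∧ HasCompactSupport υ ∧ tsupport υ ⊆ Set.Ioi 0 ∧
      (0 < ∫ t in Set.Ioi (0 : ℝ), ‖υ t‖ ^ 2 * Real.sinh t ^ (m - 1)) ∧
      (∫ t in Set.Ioi (0 : ℝ),
          ‖deriv (deriv υ) t + ((((m : ℝ) - 1) * coth t : ℝ) : ℂ) * deriv υ t
            + (lam : ℂ) * υ t‖ ^ 2 * Real.sinh t ^ (m - 1))
        ≤ ε * ∫ t in Set.Ioi (0 : ℝ), ‖υ t‖ ^ 2 * Real.sinh t ^ (m - 1) := by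
  classical
  have le_top' : (1 : WithTop ℕ∞) ≤ ((⊤:ℕ∞) : WithTop ℕ∞) := by exact_mod_cast le_top
  have hm2 : (2:ℝ) ≤ (m:ℝ) := by exact_mod_cast hm
  set n : ℕ := m - 1 with hndef
  have hncast : (n:ℝ) = (m:ℝ) - 1 := by
    rw [hndef, Nat.cast_sub (by omega : 1 ≤ m), Nat.cast_one]
  set ρ : ℝ := ((m:ℝ) - 1) / 2 with hρdef
  have hρpos : (0:ℝ) < ρ := by rw [hρdef]; linarith
  have hρsq : ρ ^ 2 = ((m:ℝ)-1)^2/4 := by rw [hρdef]; ring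
  have hlamρ : 0 < lam - ρ^2 := by rw [hρsq]; linarith
  set k : ℝ := Real.sqrt (lam - ρ^2) with hkdef
  have hkpos : 0 < k := Real.sqrt_pos.mpr hlamρ
  have hk2 : k^2 = lam - ρ^2 := Real.sq_sqrt hlamρ.le
  set μ : ℂ := -(ρ:ℂ) + (k:ℂ)*Complex.I with hμdef
  have hquad : μ^2 + 2*(ρ:ℂ)*μ + (lam:ℂ) = 0 := by
    have hk2' : (k:ℂ)^2 = (lam:ℂ) - (ρ:ℂ)^2 := by exact_mod_cast hk2
    rw [hμdef]
    linear_combination (-1 : ℂ) * hk2' + (k:ℂ)^2 * Complex.I_sq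
  -- the bump function
  set f : ContDiffBump (0:ℝ) := ⟨1, 2, one_pos, one_lt_two⟩ with hfdef
  set g : ℝ → ℝ := ⇑f with hgdef
  have hgc : ContDiff ℝ (⊤:ℕ∞) g := f.contDiff
  have hgcs : HasCompactSupport g := f.hasCompactSupport
  have hg0 : ∀ x : ℝ, 2 ≤ |x| → g x = 0 := by
    intro x hx
    exact f.zero_of_le_dist (by simpa [Real.dist_eq] using hx)
  have hg1 : ∀ x : ℝ, |x| ≤ 1 → g x = 1 := by
    intro x hx
    exact f.one_of_mem_closedBall (by simpa [Real.dist_eq] using hx)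
  have hgnn : ∀ x : ℝ, 0 ≤ g x := fun x => f.nonneg
  have hgle : ∀ x : ℝ, g x ≤ 1 := fun x => f.le_one
  set D1 : ℝ → ℝ := deriv g with hD1def
  set D2 : ℝ → ℝ := deriv D1 with hD2def
  have hD1c : ContDiff ℝ (⊤:ℕ∞) D1 := by
    have := hgc.iterate_deriv 1
    simpa [hD1def] using this
  have hD2c : ContDiff ℝ (⊤:ℕ∞) D2 := by
    have := hgc.iterate_deriv 2
    simpa [hD1def, hD2def, Function.iterate_succ_apply', Function.iterate_one] using this
  have hD1cs : HasCompactSupport D1 := hgcs.deriv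
  have hD2cs : HasCompactSupport D2 := hD1cs.deriv
  have hD10 : ∀ x : ℝ, 2 < |x| → D1 x = 0 := by
    intro x hx
    have hx' : x ∉ tsupport g := by
      rw [hgdef, f.tsupport_eq]
      simp only [mem_closedBall, Real.dist_eq, hfdef, sub_zero]
      exact not_le.2 hx
    have := support_deriv_subset (f := g)
    by_contra h
    exact hx' (this (by simpa [hD1def, Function.mem_support] using h))
  have hD20 : ∀ x : ℝ, 2 < |x| → D2 x = 0 := by
    intro x hx
    have hx' : x ∉ tsupport D1 := by
      intro hmem
      have h1 : tsupport D1 ⊆ tsupport g :=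
        closure_minimal (support_deriv_subset (f := g)) (isClosed_closure)
      have := h1 hmem
      rw [hgdef, f.tsupport_eq] at this
      simp only [mem_closedBall, Real.dist_eq, hfdef, sub_zero] at this
      linarith [hx]
    have := support_deriv_subset (f := D1)
    by_contra h
    exact hx' (this (by simpa [hD2def, Function.mem_support] using h))
  -- bounds on the derivatives of the bump
  obtain ⟨A1, hA1⟩ := hD1cs.exists_bound_of_continuous hD1c.continuous
  obtain ⟨A2, hA2⟩ := hD2cs.exists_bound_of_continuous hD2c.continuous
  set A : ℝ := max A1 A2 with hAdef
  have hAnn : 0 ≤ A := le_trans (abs_nonneg _) (le_trans (hA1 0) (le_max_left _ _))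
  have hAD1 : ∀ x, |D1 x| ≤ A := fun x => le_trans (hA1 x) (le_max_left _ _)
  have hAD2 : ∀ x, |D2 x| ≤ A := fun x => le_trans (hA2 x) (le_max_right _ _)
  -- choice of R
  set K : ℝ := 2*ρ*‖μ‖ + (2*k+2*ρ)*A + A with hKdef
  have hKnn : 0 ≤ K := by
    have := norm_nonneg μ
    have := hkpos.le
    positivity
  set c₁ : ℝ := (2/5 : ℝ)^n with hc₁def
  have hc₁ : 0 < c₁ := by positivity
  set R : ℝ := max 1 (Real.sqrt (2*K^2/(ε*c₁))) with hRdef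
  have hR1 : (1:ℝ) ≤ R := le_max_left _ _
  have hRpos : (0:ℝ) < R := lt_of_lt_of_le one_pos hR1
  have hRsq : 2*K^2/(ε*c₁) ≤ R^2 := by
    have h1 : Real.sqrt (2*K^2/(ε*c₁)) ≤ R := le_max_right _ _
    have h2 : Real.sqrt (2*K^2/(ε*c₁))^2 ≤ R^2 :=
      pow_le_pow_left₀ (Real.sqrt_nonneg _) h1 2
    rwa [Real.sq_sqrt (by positivity)] at h2
  -- the profile functions
  set c : ℝ → ℝ := fun t => t / R - 3 with hcdef
  set ψ : ℝ → ℝ := fun t => g (c t) with hψdef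
  set ψ₁ : ℝ → ℝ := fun t => D1 (c t) * R⁻¹ with hψ₁def
  set ψ₂ : ℝ → ℝ := fun t => D2 (c t) * R⁻¹ * R⁻¹ with hψ₂def
  have hcder : ∀ t : ℝ, HasDerivAt c R⁻¹ t := by
    intro t
    have := ((hasDerivAt_id t).div_const R).sub_const 3
    simpa [hcdef, one_div] using this
  have hcc : ContDiff ℝ (⊤:ℕ∞) c := by
    rw [hcdef]
    exact (contDiff_id.div_const R).sub contDiff_const
  have hψder : ∀ t : ℝ, HasDerivAt ψ (D1 (c t) * R⁻¹) t := by
    intro t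
    have h1 : HasDerivAt g (D1 (c t)) (c t) :=
      ((hgc.differentiable (by simp)) (c t)).hasDerivAt
    exact h1.comp t (hcder t)
  have hψ₁der : ∀ t : ℝ, HasDerivAt ψ₁ (ψ₂ t) t := by
    intro t
    have h1 : HasDerivAt D1 (D2 (c t)) (c t) :=
      ((hD1c.differentiable (by simp)) (c t)).hasDerivAt
    exact (h1.comp t (hcder t)).mul_const R⁻¹
  -- the exponential factor
  have hEder : ∀ t : ℝ, HasDerivAt (fun s : ℝ => Complex.exp (μ * s))
      (μ * Complex.exp (μ * t)) t := by
    intro t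
    have h1 : HasDerivAt (fun z : ℂ => Complex.exp (μ * z))
        (Complex.exp (μ * t) * μ) (t : ℂ) :=
      (Complex.hasDerivAt_exp (μ * t)).comp (t:ℂ) (by simpa using (hasDerivAt_id (t:ℂ)).const_mul μ)
    simpa [mul_comm] using h1.comp_ofReal
  -- the trial function and its derivatives
  set υ : ℝ → ℂ := fun t => Complex.exp (μ * t) * (ψ t : ℂ) with hυdef
  set u1 : ℝ → ℂ := fun t => Complex.exp (μ * t) * (μ * (ψ t : ℂ) + (ψ₁ t : ℂ)) with hu1def
  set u2 : ℝ → ℂ := fun t => Complex.exp (μ * t) *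
      (μ^2 * (ψ t : ℂ) + 2*μ*(ψ₁ t : ℂ) + (ψ₂ t : ℂ)) with hu2def
  have hψ₁eq : ∀ t : ℝ, ψ₁ t = D1 (c t) * R⁻¹ := fun t => rfl
  have hυder : ∀ t : ℝ, HasDerivAt υ (u1 t) t := by
    intro t
    have h1 : HasDerivAt (fun s : ℝ => ((ψ s : ℝ) : ℂ)) ((ψ₁ t : ℂ)) t := by
      have := (hψder t).ofReal_comp
      simpa [hψ₁eq] using this
    have := (hEder t).mul h1
    refine this.congr_deriv ?_
    rw [hu1def]
    push_cast
    ring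
  have hu1der : ∀ t : ℝ, HasDerivAt u1 (u2 t) t := by
    intro t
    have h1 : HasDerivAt (fun s : ℝ => (μ * (ψ s : ℂ) + (ψ₁ s : ℂ)))
        (μ * (ψ₁ t : ℂ) + (ψ₂ t : ℂ)) t := by
      have ha : HasDerivAt (fun s : ℝ => ((ψ s : ℝ) : ℂ)) ((ψ₁ t : ℂ)) t := by
        have := (hψder t).ofReal_comp
        simpa [hψ₁eq] using this
      have hb : HasDerivAt (fun s : ℝ => ((ψ₁ s : ℝ) : ℂ)) ((ψ₂ t : ℂ)) t :=
        (hψ₁der t).ofReal_comp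
      exact (ha.const_mul μ).add hb
    have := (hEder t).mul h1
    refine this.congr_deriv ?_
    rw [hu2def]
    push_cast
    ring
  have hderivυ : deriv υ = u1 := funext fun t => (hυder t).deriv
  have hderivu1 : deriv u1 = u2 := funext fun t => (hu1der t).deriv
  -- smoothness
  have hυc : ContDiff ℝ (⊤:ℕ∞) υ := by
    rw [hυdef]
    have h1 : ContDiff ℝ (⊤:ℕ∞) (fun t : ℝ => Complex.exp (μ * t)) :=
      Complex.contDiff_exp.comp (contDiff_const.mul Complex.ofRealCLM.contDiff)
    have h2 : ContDiff ℝ (⊤:ℕ∞) (fun t : ℝ => ((ψ t : ℝ) : ℂ)) :=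
      Complex.ofRealCLM.contDiff.comp (hgc.comp hcc)
    exact h1.mul h2
  -- support facts
  have hcmap : ∀ t : ℝ, t ∉ Icc R (5*R) → 2 < |c t| := by
    intro t ht
    rw [mem_Icc, not_and_or] at ht
    rcases ht with ht | ht
    · push_neg at ht
      have : t / R < 1 := (div_lt_one hRpos).2 ht
      rw [hcdef]
      rw [abs_of_neg (by linarith)]
      linarith
    · push_neg at ht
      have : 5 < t / R := by
        rw [lt_div_iff₀ hRpos]; linarith
      rw [hcdef]
      rw [abs_of_pos (by linarith)]
      linarith
  have hψ0 : ∀ t : ℝ, t ∉ Icc R (5*R) → ψ t = 0 := fun t ht => hg0 _ (hcmap t ht).le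
  have hψ₁0 : ∀ t : ℝ, t ∉ Icc R (5*R) → ψ₁ t = 0 := by
    intro t ht; rw [hψ₁def]; simp [hD10 _ (hcmap t ht)]
  have hψ₂0 : ∀ t : ℝ, t ∉ Icc R (5*R) → ψ₂ t = 0 := by
    intro t ht; rw [hψ₂def]; simp [hD20 _ (hcmap t ht)]
  have hυ0 : ∀ t : ℝ, t ∉ Icc R (5*R) → υ t = 0 := by
    intro t ht; rw [hυdef]; simp [hψ0 t ht]
  have hu10 : ∀ t : ℝ, t ∉ Icc R (5*R) → u1 t = 0 := by
    intro t ht; rw [hu1def]; simp [hψ0 t ht, hψ₁0 t ht]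
  have hu20 : ∀ t : ℝ, t ∉ Icc R (5*R) → u2 t = 0 := by
    intro t ht; rw [hu2def]; simp [hψ0 t ht, hψ₁0 t ht, hψ₂0 t ht]
  have hυcs : HasCompactSupport υ := HasCompactSupport.intro isCompact_Icc hυ0
  have hυts : tsupport υ ⊆ Set.Ioi 0 := by
    have h1 : tsupport υ ⊆ Icc R (5*R) := by
      apply closure_minimal _ isClosed_Icc
      intro t ht
      by_contra h
      exact ht (hυ0 t h)
    intro t ht
    have := h1 ht
    rw [mem_Icc] at this
    exact mem_Ioi.2 (by linarith [this.1])
  -- the factorization of the differential expression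
  set Q : ℝ → ℂ := fun t => ((2*ρ*(coth t - 1) : ℝ) : ℂ) * μ * (ψ t : ℂ)
      + (((2*k : ℝ) : ℂ)*Complex.I + ((2*ρ*(coth t - 1) : ℝ) : ℂ)) * (ψ₁ t : ℂ)
      + (ψ₂ t : ℂ) with hQdef
  have hmρc : ((m:ℕ):ℂ) - 1 = 2*(ρ:ℂ) := by
    rw [hρdef]; push_cast; ring
  have hfact : ∀ t : ℝ, u2 t + ((((m:ℝ)-1) * coth t : ℝ) : ℂ) * u1 t + (lam:ℂ) * υ t
      = Complex.exp (μ * t) * Q t := by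
    intro t
    simp only [hu2def, hu1def, hυdef, hQdef]
    push_cast
    linear_combination (Complex.exp (μ*(t:ℂ)) * (ψ t : ℂ)) * hquad
      + (2*Complex.exp (μ*(t:ℂ)) * ((ψ₁ t : ℂ))) * hμdef
      + (((coth t : ℝ):ℂ) * Complex.exp (μ*(t:ℂ)) * (μ*(ψ t:ℂ)+(ψ₁ t:ℂ))) * hmρc
  -- pointwise bound on Q
  have hQb : ∀ t ∈ Icc R (5*R), ‖Q t‖ ≤ K / R := by
    intro t ht
    rw [mem_Icc] at ht
    have ht1 : (1:ℝ) ≤ t := le_trans hR1 ht.1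
    have hδ0 : 0 ≤ coth t - 1 := aux_delta_nonneg ht1
    have hδ1 : coth t - 1 ≤ 1 :=
      le_trans (aux_delta_le ht1) (aux_exp_neg_le_one (by linarith))
    have hδR : coth t - 1 ≤ R⁻¹ := by
      refine le_trans (aux_delta_le ht1) (le_trans ?_ (aux_exp_neg_le_inv hR1))
      exact Real.exp_le_exp.2 (by linarith [ht.1])
    have hRinv1 : R⁻¹ ≤ 1 := by
      rw [inv_le_one_iff₀]; right; exact hR1
    have hRinv0 : (0:ℝ) ≤ R⁻¹ := inv_nonneg.2 hRpos.le
    have hψb : |ψ t| ≤ 1 := by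
      rw [abs_le]; exact ⟨by linarith [hgnn (c t)], hgle (c t)⟩
    have hψ₁b : |ψ₁ t| ≤ A * R⁻¹ := by
      simp only [hψ₁def, abs_mul, abs_of_nonneg hRinv0]
      exact mul_le_mul_of_nonneg_right (hAD1 _) hRinv0
    have hψ₂b : |ψ₂ t| ≤ A * R⁻¹ := by
      simp only [hψ₂def, abs_mul, abs_of_nonneg hRinv0]
      calc |D2 (c t)| * R⁻¹ * R⁻¹ ≤ A * R⁻¹ * 1 := by
            apply mul_le_mul (mul_le_mul_of_nonneg_right (hAD2 _) hRinv0) hRinv1 hRinv0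
            positivity
        _ = A * R⁻¹ := by ring
    have h1 : ‖((2*ρ*(coth t - 1) : ℝ) : ℂ) * μ * (ψ t : ℂ)‖
        ≤ 2*ρ*R⁻¹*‖μ‖ := by
      rw [norm_mul, norm_mul, Complex.norm_real, Real.norm_eq_abs, Complex.norm_real, Real.norm_eq_abs]
      have e1 : |2*ρ*(coth t - 1)| = 2*ρ*(coth t - 1) := abs_of_nonneg (by positivity)
      rw [e1]
      calc 2*ρ*(coth t - 1) * ‖μ‖ * |ψ t|
          ≤ 2*ρ*R⁻¹ * ‖μ‖ * 1 := by
            apply mul_le_mul _ hψb (abs_nonneg _) (by positivity)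
            exact mul_le_mul_of_nonneg_right (by nlinarith) (norm_nonneg μ)
        _ = 2*ρ*R⁻¹*‖μ‖ := by ring
    have h2 : ‖(((2*k : ℝ) : ℂ)*Complex.I + ((2*ρ*(coth t - 1) : ℝ) : ℂ)) * (ψ₁ t : ℂ)‖
        ≤ (2*k + 2*ρ) * (A * R⁻¹) := by
      rw [norm_mul, Complex.norm_real, Real.norm_eq_abs]
      have e2 : ‖((2*k : ℝ) : ℂ)*Complex.I + ((2*ρ*(coth t - 1) : ℝ) : ℂ)‖
          ≤ 2*k + 2*ρ := by
        calc ‖((2*k : ℝ) : ℂ)*Complex.I + ((2*ρ*(coth t - 1) : ℝ) : ℂ)‖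
            ≤ ‖((2*k : ℝ) : ℂ)*Complex.I‖
              + ‖((2*ρ*(coth t - 1) : ℝ) : ℂ)‖ := norm_add_le _ _
          _ = |2*k| + |2*ρ*(coth t - 1)| := by
              rw [norm_mul, Complex.norm_I, Complex.norm_real, Real.norm_eq_abs, Complex.norm_real, Real.norm_eq_abs, mul_one]
          _ ≤ 2*k + 2*ρ := by
              rw [abs_of_nonneg (by positivity), abs_of_nonneg (by positivity)]
              nlinarith
      exact mul_le_mul e2 hψ₁b (abs_nonneg _) (by positivity)
    have h3 : ‖(ψ₂ t : ℂ)‖ ≤ A * R⁻¹ := by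
      rw [Complex.norm_real, Real.norm_eq_abs]; exact hψ₂b
    calc ‖Q t‖
        ≤ ‖((2*ρ*(coth t - 1) : ℝ) : ℂ) * μ * (ψ t : ℂ)
            + (((2*k : ℝ) : ℂ)*Complex.I + ((2*ρ*(coth t - 1) : ℝ) : ℂ)) * (ψ₁ t : ℂ)‖
          + ‖(ψ₂ t : ℂ)‖ := by
          rw [hQdef]; exact norm_add_le _ _
      _ ≤ ‖((2*ρ*(coth t - 1) : ℝ) : ℂ) * μ * (ψ t : ℂ)‖
          + ‖(((2*k : ℝ) : ℂ)*Complex.I + ((2*ρ*(coth t - 1) : ℝ) : ℂ)) * (ψ₁ t : ℂ)‖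
          + ‖(ψ₂ t : ℂ)‖ := by
          have := norm_add_le (((2*ρ*(coth t - 1) : ℝ) : ℂ) * μ * (ψ t : ℂ))
            ((((2*k : ℝ) : ℂ)*Complex.I + ((2*ρ*(coth t - 1) : ℝ) : ℂ)) * (ψ₁ t : ℂ))
          linarith
      _ ≤ 2*ρ*R⁻¹*‖μ‖ + (2*k + 2*ρ) * (A * R⁻¹) + A * R⁻¹ := by linarith
      _ = K / R := by rw [hKdef]; field_simp
  -- modulus of the exponential factor and the weight
  have hEabs : ∀ t : ℝ, ‖Complex.exp (μ * t)‖ = Real.exp (-ρ * t) := by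
    intro t
    rw [Complex.norm_exp]
    congr 1
    simp [hμdef, Complex.mul_re]
  have hweight : ∀ t : ℝ, ‖Complex.exp (μ * t)‖^2 * Real.sinh t ^ n
      = (Real.exp (-t) * Real.sinh t)^n := by
    intro t
    rw [hEabs, mul_pow]
    congr 1
    rw [sq, ← Real.exp_add, ← Real.exp_nat_mul]
    congr 1
    rw [hncast, hρdef]; ring
  -- the numerator integrand
  set G : ℝ → ℝ := fun t =>
    ‖u2 t + ((((m:ℝ)-1) * coth t : ℝ) : ℂ) * u1 t + (lam:ℂ) * υ t‖^2
      * Real.sinh t ^ n with hGdef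
  have hG0 : ∀ t : ℝ, t ∉ Icc R (5*R) → G t = 0 := by
    intro t ht
    simp [hGdef, hu20 t ht, hu10 t ht, hυ0 t ht]
  have hGb : ∀ t ∈ Icc R (5*R), G t ≤ (K/R)^2 := by
    intro t ht
    have ht0 : (0:ℝ) < t := by
      rw [mem_Icc] at ht; linarith [ht.1]
    have hwmem := aux_weight_mem ht0.le
    rw [hGdef]
    simp only
    have heq : ‖Complex.exp (μ*(t:ℂ))‖^2 * ‖Q t‖^2 * Real.sinh t ^ n
        = ‖Q t‖^2 * ((Real.exp (-t) * Real.sinh t)^n) := by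
      rw [← hweight t]; ring
    rw [hfact t, norm_mul, mul_pow, heq]
    have h1 : ‖Q t‖^2 ≤ (K/R)^2 :=
      pow_le_pow_left₀ (norm_nonneg _) (hQb t ht) 2
    have h2 : (Real.exp (-t) * Real.sinh t)^n ≤ 1 :=
      pow_le_one₀ hwmem.1 hwmem.2
    calc ‖Q t‖^2 * (Real.exp (-t) * Real.sinh t)^n
        ≤ (K/R)^2 * 1 := by
          apply mul_le_mul h1 h2 (by positivity) (by positivity)
      _ = (K/R)^2 := by ring
  -- continuity of the numerator integrand on the support interval
  have hψcont : Continuous ψ := (hgc.continuous).comp hcc.continuous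
  have hψ₁cont : Continuous ψ₁ := ((hD1c.continuous).comp hcc.continuous).mul continuous_const
  have hψ₂cont : Continuous ψ₂ :=
    (((hD2c.continuous).comp hcc.continuous).mul continuous_const).mul continuous_const
  have hEcont : Continuous (fun t : ℝ => Complex.exp (μ * t)) :=
    Complex.continuous_exp.comp (continuous_const.mul Complex.continuous_ofReal)
  have hυcont : Continuous υ := hEcont.mul (Complex.continuous_ofReal.comp hψcont)
  have hu1cont : Continuous u1 := by
    rw [hu1def]
    exact hEcont.mul ((continuous_const.mul (Complex.continuous_ofReal.comp hψcont)).add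
      (Complex.continuous_ofReal.comp hψ₁cont))
  have hu2cont : Continuous u2 := by
    rw [hu2def]
    exact hEcont.mul (((continuous_const.mul (Complex.continuous_ofReal.comp hψcont)).add
      (continuous_const.mul (Complex.continuous_ofReal.comp hψ₁cont))).add
      (Complex.continuous_ofReal.comp hψ₂cont))
  have hcothcont : ContinuousOn coth (Icc R (5*R)) := by
    apply ContinuousOn.div Real.continuous_cosh.continuousOn Real.continuous_sinh.continuousOn
    intro t ht
    rw [mem_Icc] at ht
    exact (Real.sinh_pos_iff.2 (by linarith [ht.1])).ne'
  have hGcont : ContinuousOn G (Icc R (5*R)) := by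
    apply ContinuousOn.mul _ (Real.continuous_sinh.pow n).continuousOn
    apply ContinuousOn.pow
    apply continuous_norm.comp_continuousOn
    apply ContinuousOn.add
    apply ContinuousOn.add hu2cont.continuousOn
    · apply ContinuousOn.mul _ hu1cont.continuousOn
      apply Complex.continuous_ofReal.comp_continuousOn
      exact (continuous_const.continuousOn.mul hcothcont)
    · exact (continuous_const.mul hυcont).continuousOn
  have hGint : IntegrableOn G (Icc R (5*R)) := hGcont.integrableOn_compact isCompact_Icc
  -- numerator estimate
  have hnum : (∫ t in Set.Ioi (0:ℝ), G t) ≤ 4*K^2/R := by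
    have h1 : (∫ t in Set.Ioi (0:ℝ), G t) = ∫ t, G t := by
      apply setIntegral_eq_integral_of_forall_compl_eq_zero
      intro t ht
      apply hG0
      rw [mem_Icc]
      intro hc
      exact ht (mem_Ioi.2 (by linarith [hc.1]))
    have h2 : (∫ t in Icc R (5*R), G t) = ∫ t, G t :=
      setIntegral_eq_integral_of_forall_compl_eq_zero hG0
    rw [h1, ← h2]
    have h3 : (∫ t in Icc R (5*R), G t) ≤ ∫ _t in Icc R (5*R), (K/R)^2 := by
      apply setIntegral_mono_on hGint _ measurableSet_Icc hGb
      exact integrableOn_const measure_Icc_lt_top.ne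
    have h4 : (∫ _t in Icc R (5*R), (K/R)^2) = 4*K^2/R := by
      rw [setIntegral_const, measureReal_def, Real.volume_Icc, ENNReal.toReal_ofReal (by linarith)]
      rw [smul_eq_mul]
      field_simp
      ring
    linarith
  -- denominator integrand
  set Dq : ℝ → ℝ := fun t => ‖υ t‖^2 * Real.sinh t ^ n with hDqdef
  have hDq0 : ∀ t : ℝ, t ∉ Icc R (5*R) → Dq t = 0 := by
    intro t ht
    simp [hDqdef, hυ0 t ht]
  have hDqcont : Continuous Dq :=
    ((continuous_norm.comp hυcont).pow 2).mul (Real.continuous_sinh.pow n)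
  have hDqint : Integrable Dq :=
    hDqcont.integrable_of_hasCompactSupport (HasCompactSupport.intro isCompact_Icc hDq0)
  have hDqnn : ∀ t, 0 ≤ Dq t := by
    intro t
    rw [hDqdef]
    simp only
    have h1 : (0:ℝ) ≤ ‖υ t‖^2 := sq_nonneg _
    have h2 : (0:ℝ) ≤ ‖υ t‖^2 * Real.sinh t ^ n := by
      rcases le_or_gt 0 (Real.sinh t) with h | h
      · positivity
      · rcases Nat.even_or_odd n with he | ho
        · exact mul_nonneg h1 (he.pow_nonneg _)
        · have : υ t = 0 := by
            apply hυ0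
            rw [mem_Icc]
            intro hc
            have ht1 : (1:ℝ) ≤ t := le_trans hR1 hc.1
            have := Real.sinh_pos_iff.2 (lt_of_lt_of_le one_pos ht1)
            linarith
          simp [this]
    exact h2
  -- denominator lower bound
  have hDlow : ∀ t ∈ Icc (2*R) (4*R), c₁ ≤ Dq t := by
    intro t ht
    rw [mem_Icc] at ht
    have ht2 : (2:ℝ) ≤ t := le_trans (by linarith) ht.1
    have hψ1 : ψ t = 1 := by
      apply hg1
      rw [hcdef]
      simp only
      rw [abs_le]
      constructor
      · have : 2 ≤ t / R := (le_div_iff₀ hRpos).2 (by linarith [ht.1])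
        linarith
      · have : t / R ≤ 4 := (div_le_iff₀ hRpos).2 (by linarith [ht.2])
        linarith
    have : Dq t = (Real.exp (-t) * Real.sinh t)^n := by
      rw [hDqdef]
      simp only
      rw [hυdef]
      simp only
      rw [norm_mul, Complex.norm_real, Real.norm_eq_abs, hψ1, mul_pow]
      simp only [abs_one, one_pow, mul_one]
      rw [hweight t]
    rw [this, hc₁def]
    exact pow_le_pow_left₀ (by norm_num) (aux_weight_ge ht2) n
  have hden : c₁ * (2*R) ≤ ∫ t in Set.Ioi (0:ℝ), Dq t := by
    have h1 : (∫ _t in Icc (2*R) (4*R), c₁) = c₁ * (2*R) := by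
      rw [setIntegral_const, measureReal_def, Real.volume_Icc, ENNReal.toReal_ofReal (by linarith)]
      rw [smul_eq_mul]
      ring_nf
    have h2 : (∫ _t in Icc (2*R) (4*R), c₁) ≤ ∫ t in Icc (2*R) (4*R), Dq t := by
      apply setIntegral_mono_on _ hDqint.integrableOn measurableSet_Icc hDlow
      exact integrableOn_const measure_Icc_lt_top.ne
    have h3 : (∫ t in Icc (2*R) (4*R), Dq t) ≤ ∫ t in Set.Ioi (0:ℝ), Dq t := by
      apply setIntegral_mono_set hDqint.integrableOn
        (Filter.Eventually.of_forall hDqnn)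
      apply HasSubset.Subset.eventuallyLE
      intro x hx
      rw [mem_Icc] at hx
      exact mem_Ioi.2 (by linarith [hx.1])
    linarith
  have hdenpos : 0 < ∫ t in Set.Ioi (0:ℝ), Dq t :=
    lt_of_lt_of_le (by positivity) hden
  -- final assembly
  refine ⟨υ, hυc, hυcs, hυts, hdenpos, ?_⟩
  rw [hderivυ, hderivu1]
  have hgoalnum : (∫ t in Set.Ioi (0:ℝ),
      ‖u2 t + ((((m:ℝ)-1) * coth t : ℝ) : ℂ) * u1 t + (lam:ℂ) * υ t‖^2
        * Real.sinh t ^ n) = ∫ t in Set.Ioi (0:ℝ), G t := by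
    rw [hGdef]
  rw [hgoalnum]
  have hstep : 4*K^2/R ≤ ε * (c₁ * (2*R)) := by
    rw [div_le_iff₀ hRpos]
    have h1 : 2*K^2 ≤ R^2 * (ε*c₁) := (div_le_iff₀ (by positivity)).1 hRsq
    nlinarith
  calc (∫ t in Set.Ioi (0:ℝ), G t) ≤ 4*K^2/R := hnum
    _ ≤ ε * (c₁ * (2*R)) := hstep
    _ ≤ ε * ∫ t in Set.Ioi (0:ℝ), Dq t := by
        exact mul_le_mul_of_nonneg_left hden hε.le
end
end
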